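/- arXiv:2109.10264 — 6 statements merged into one kernel-verified Lean document; each statement's English description precedes it below -/
import Mathlib

section
/- Let f be a holomorphic function on the open unit disk 𝔻 ⊆ ℂ with |f(z)| < 1 for all z ∈ 𝔻. Then the modulus of f is distance decreasing with respect to the hyperbolic distance: σ(|f(z)|, |f(w)|) ≤ σ(z, w) for all z, w ∈ 𝔻, where |f(z)| and |f(w)| are regarded as points of the unit disk on the nonnegative real axis. -/
/-- The pseudo-hyperbolic distance on the unit disk. -/
noncomputable def pseudoHypDist (z w : ℂ) : ℝ :=
  ‖z - w‖ / ‖1 - (starRingEnd ℂ) z * w‖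

/-- The hyperbolic distance on the unit disk (curvature −1, density 2/(1−|z|²)). -/
noncomputable def hypDist (z w : ℂ) : ℝ :=
  Real.log ((1 + pseudoHypDist z w) / (1 - pseudoHypDist z w))


open Complex Metric

lemma key_id (a b : ℂ) :
    ‖1 - (starRingEnd ℂ) a * b‖ ^ 2 - ‖a - b‖ ^ 2
      = (1 - ‖a‖ ^ 2) * (1 - ‖b‖ ^ 2) := by
  simp only [Complex.sq_norm, Complex.normSq_apply, Complex.sub_re, Complex.sub_im,
    Complex.mul_re, Complex.mul_im, Complex.one_re, Complex.one_im,
    Complex.conj_re, Complex.conj_im]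
  ring

lemma denom_ne (a b : ℂ) (ha : ‖a‖ < 1) (hb : ‖b‖ ≤ 1) :
    1 - (starRingEnd ℂ) a * b ≠ 0 := by
  intro h
  have h1 : (starRingEnd ℂ) a * b = 1 := by linear_combination -h
  have := congrArg (‖·‖) h1
  rw [norm_mul, Complex.norm_conj, norm_one] at this
  nlinarith [norm_nonneg a, norm_nonneg b]

lemma mem_abs {u : ℂ} : u ∈ ball (0:ℂ) 1 ↔ ‖u‖ < 1 := by
  simp [mem_ball_zero_iff]

noncomputable def mob (a z : ℂ) : ℂ := (a - z) / (1 - (starRingEnd ℂ) a * z)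

lemma mob_mem {a z : ℂ} (ha : ‖a‖ < 1) (hz : ‖z‖ < 1) :
    ‖mob a z‖ < 1 := by
  have hd := denom_ne a z ha hz.le
  have hd' : 0 < ‖1 - (starRingEnd ℂ) a * z‖ := by
    simpa [norm_pos_iff] using hd
  rw [mob, norm_div, div_lt_one hd']
  have h1 : (0:ℝ) < (1 - ‖a‖ ^ 2) * (1 - ‖z‖ ^ 2) :=
    mul_pos (by nlinarith [norm_nonneg a]) (by nlinarith [norm_nonneg z])
  have h2 : ‖a - z‖ ^ 2 < ‖1 - (starRingEnd ℂ) a * z‖ ^ 2 := by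
    nlinarith [key_id a z]
  exact lt_of_pow_lt_pow_left₀ 2 (norm_nonneg _) h2

lemma mob_diffAt {a z : ℂ} (hd : 1 - (starRingEnd ℂ) a * z ≠ 0) :
    DifferentiableAt ℂ (mob a) z := by
  apply DifferentiableAt.div
  · exact (differentiableAt_const a).sub differentiableAt_id
  · exact (differentiableAt_const 1).sub ((differentiableAt_const _).mul differentiableAt_id)
  · exact hd

lemma mob_invol {a z : ℂ} (ha : ‖a‖ < 1) (hz : ‖z‖ < 1) :
    mob a (mob a z) = z := by
  have hd := denom_ne a z ha hz.le
  have hd2 : 1 - a * (starRingEnd ℂ) z ≠ 0 := by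
    intro h
    apply hd
    have := congrArg (starRingEnd ℂ) h
    simpa [map_sub, map_mul, Complex.conj_conj, mul_comm] using this
  have ha2 : 1 - (starRingEnd ℂ) a * a ≠ 0 := denom_ne a a ha ha.le
  simp only [mob, map_div₀, map_sub, map_mul, map_one, Complex.conj_conj]
  have h4 : 1 - (starRingEnd ℂ) a * ((a - z) / (1 - (starRingEnd ℂ) a * z))
      = (1 - (starRingEnd ℂ) a * a) / (1 - (starRingEnd ℂ) a * z) := by
    field_simp
    ring
  have h5 : a - (a - z) / (1 - (starRingEnd ℂ) a * z)
      = z * (1 - (starRingEnd ℂ) a * a) / (1 - (starRingEnd ℂ) a * z) := by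
    rw [eq_div_iff hd, sub_mul, div_mul_cancel₀ _ hd]
    ring
  rw [h4, h5, div_div_div_cancel_right₀, mul_div_assoc, div_self ha2, mul_one]
  exact hd

lemma mob_self (a : ℂ) : mob a a = 0 := by simp [mob]

/-- Schwarz–Pick. -/
lemma schwarz_pick (f : ℂ → ℂ)
    (hf : ∀ z ∈ ball (0 : ℂ) 1, DifferentiableAt ℂ f z)
    (hb : ∀ z ∈ ball (0 : ℂ) 1, ‖f z‖ < 1)
    {z w : ℂ} (hz : z ∈ ball (0 : ℂ) 1) (hw : w ∈ ball (0 : ℂ) 1) :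
    ‖mob (f w) (f z)‖ ≤ ‖mob w z‖ := by
  rw [mem_abs] at hz hw
  set g : ℂ → ℂ := fun u => mob (f w) (f (mob w u)) with hg
  have hfw := hb w (mem_abs.2 hw)
  have hmem : ∀ u ∈ ball (0 : ℂ) 1, mob w u ∈ ball (0 : ℂ) 1 := fun u hu =>
    mem_abs.2 (mob_mem hw (mem_abs.1 hu))
  have hgd : DifferentiableOn ℂ g (ball 0 1) := by
    intro u hu
    have h1 : DifferentiableAt ℂ (mob w) u :=
      mob_diffAt (denom_ne w u hw (mem_abs.1 hu).le)
    have h2 : DifferentiableAt ℂ f (mob w u) := hf _ (hmem u hu)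
    have h3 : DifferentiableAt ℂ (mob (f w)) (f (mob w u)) :=
      mob_diffAt (denom_ne _ _ hfw (hb _ (hmem u hu)).le)
    exact ((h3.comp _ h2).comp u h1).differentiableWithinAt
  have hmaps : Set.MapsTo g (ball 0 1) (ball 0 1) := fun u hu =>
    mem_abs.2 (mob_mem hfw (hb _ (hmem u hu)))
  have hg0 : g 0 = 0 := by
    have : mob w 0 = w := by simp [mob]
    rw [hg]; simp only [this]; exact mob_self _
  have key := Complex.norm_le_norm_of_mapsTo_ball hgd (hmaps.mono_right ball_subset_closedBall) hg0
    (z := mob w z) (mem_abs.1 (mem_abs.2 (mob_mem hw hz)))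
  simp only [hg] at key
  rwa [mob_invol hw hz] at key

lemma pseudo_eq (z w : ℂ) : pseudoHypDist z w = ‖mob w z‖ := by
  have h1 : ‖1 - (starRingEnd ℂ) z * w‖
      = ‖1 - (starRingEnd ℂ) w * z‖ := by
    rw [← Complex.norm_conj (1 - (starRingEnd ℂ) w * z)]
    simp [map_sub, map_mul, mul_comm]
  rw [pseudoHypDist, mob, norm_div, h1, norm_sub_rev z w]

lemma pseudo_nonneg (z w : ℂ) : 0 ≤ pseudoHypDist z w :=
  div_nonneg (norm_nonneg _) (norm_nonneg _)

lemma pseudo_lt_one {z w : ℂ} (hz : ‖z‖ < 1) (hw : ‖w‖ < 1) :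
    pseudoHypDist z w < 1 := by
  rw [pseudo_eq]; exact mob_mem hw hz

lemma pseudo_abs_le {a b : ℂ} (ha : ‖a‖ < 1) (hb : ‖b‖ < 1) :
    pseudoHypDist (‖a‖ : ℂ) (‖b‖ : ℂ) ≤ pseudoHypDist a b := by
  set p := ‖a‖ with hp
  set q := ‖b‖ with hq
  have hp0 := norm_nonneg a
  have hq0 := norm_nonneg b
  have hBpos : 0 < ‖1 - (starRingEnd ℂ) a * b‖ := by
    simpa [norm_pos_iff] using denom_ne a b ha hb.le
  have hBpos' : 0 < ‖1 - (starRingEnd ℂ) (p:ℂ) * (q:ℂ)‖ := by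
    have e2 : ‖(p:ℂ)‖ = p := Complex.norm_of_nonneg (hp ▸ hp0)
    have e3 : ‖(q:ℂ)‖ = q := Complex.norm_of_nonneg (hq ▸ hq0)
    simpa [norm_pos_iff] using
      denom_ne (p:ℂ) (q:ℂ) (by rw [e2]; exact ha) (by rw [e3]; exact hb.le)
  rw [pseudoHypDist, pseudoHypDist, div_le_div_iff₀ hBpos' hBpos]
  have hA : |p - q| ≤ ‖a - b‖ := by
    simpa using abs_norm_sub_norm_le a b
  have key1 := key_id a b
  rw [← hp, ← hq] at key1
  have key2 := key_id (p:ℂ) (q:ℂ)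
  have e1 : ‖(p:ℂ) - (q:ℂ)‖ = |p - q| := by
    rw [← Complex.ofReal_sub, Complex.norm_real, Real.norm_eq_abs]
  have e2 : ‖(p:ℂ)‖ = p := Complex.norm_of_nonneg (hp ▸ hp0)
  have e3 : ‖(q:ℂ)‖ = q := Complex.norm_of_nonneg (hq ▸ hq0)
  rw [e1, e2, e3] at key2
  rw [e1]
  have hX : |p - q| ^ 2 ≤ ‖a - b‖ ^ 2 :=
    pow_le_pow_left₀ (abs_nonneg _) hA 2
  have hC : (0:ℝ) ≤ (1 - p ^ 2) * (1 - q ^ 2) := by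
    have h5 : (0:ℝ) ≤ p := hp ▸ hp0
    have h6 : (0:ℝ) ≤ q := hq ▸ hq0
    apply mul_nonneg <;> nlinarith
  have hB' : ‖1 - (starRingEnd ℂ) (p:ℂ) * (q:ℂ)‖ ^ 2
      = |p - q| ^ 2 + (1 - p ^ 2) * (1 - q ^ 2) := by linarith
  have hB : ‖1 - (starRingEnd ℂ) a * b‖ ^ 2
      = ‖a - b‖ ^ 2 + (1 - p ^ 2) * (1 - q ^ 2) := by linarith
  have hXC : |p - q| ^ 2 * ((1 - p ^ 2) * (1 - q ^ 2))
      ≤ ‖a - b‖ ^ 2 * ((1 - p ^ 2) * (1 - q ^ 2)) :=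
    mul_le_mul_of_nonneg_right hX hC
  have hsq : |p - q| ^ 2 * ‖1 - (starRingEnd ℂ) a * b‖ ^ 2
      ≤ ‖a - b‖ ^ 2 * ‖1 - (starRingEnd ℂ) (p:ℂ) * (q:ℂ)‖ ^ 2 := by
    rw [hB', hB]
    nlinarith [hXC]
  have h2 : 0 ≤ ‖a - b‖ := norm_nonneg _
  refine le_of_pow_le_pow_left₀ two_ne_zero (mul_nonneg h2 hBpos'.le) ?_
  rw [mul_pow, mul_pow]
  exact hsq

/-- If f is holomorphic on the unit disk with |f| < 1, then
σ(|f(z)|, |f(w)|) ≤ σ(z, w) for z, w in the disk. -/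
theorem hypDist_abs_holomorphic_le (f : ℂ → ℂ)
    (hf : ∀ z ∈ Metric.ball (0 : ℂ) 1, DifferentiableAt ℂ f z)
    (hb : ∀ z ∈ Metric.ball (0 : ℂ) 1, ‖f z‖ < 1)
    (z w : ℂ) (hz : z ∈ Metric.ball (0 : ℂ) 1) (hw : w ∈ Metric.ball (0 : ℂ) 1) :
    hypDist (‖f z‖ : ℂ) (‖f w‖ : ℂ) ≤ hypDist z w := by
  have hz' := mem_abs.1 hz
  have hw' := mem_abs.1 hw
  have hfz := hb z hz
  have hfw := hb w hw
  have step1 : pseudoHypDist (‖f z‖ : ℂ) (‖f w‖ : ℂ)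
      ≤ pseudoHypDist (f z) (f w) := pseudo_abs_le hfz hfw
  have step2 : pseudoHypDist (f z) (f w) ≤ pseudoHypDist z w := by
    rw [pseudo_eq, pseudo_eq]
    exact schwarz_pick f hf hb hz hw
  set r1 := pseudoHypDist (‖f z‖ : ℂ) (‖f w‖ : ℂ)
  set r2 := pseudoHypDist z w
  have hr1 : 0 ≤ r1 := pseudo_nonneg _ _
  have hr2 : r2 < 1 := pseudo_lt_one hz' hw'
  have hr12 : r1 ≤ r2 := step1.trans step2
  rw [hypDist, hypDist]
  apply Real.log_le_log
  · apply div_pos (by linarith) (by linarith)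
  · rw [div_le_div_iff₀ (by linarith) (by linarith)]
    nlinarith
end

section
/- Let a < b be extended real numbers with (a, b) ≠ ℝ, let ω be a positive, twice continuously differentiable function on the open interval J = (a, b) satisfying (ω'(t)² − ω(t)·ω''(t)) / ω(t)⁴ ≤ −1 for all t ∈ J, and let f be a holomorphic function on the open unit disk 𝔻 ⊆ ℂ with Re f(z) ∈ J for all z ∈ 𝔻. Then for all z, w ∈ 𝔻, the ω-distance between the real parts satisfies d_ω(Re f(z), Re f(w)) ≤ σ(z, w), i.e. |∫_{Re f(w)}^{Re f(z)} ω(t) dt| ≤ σ(z, w). -/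
open Complex Metric Set Filter Topology

set_option maxHeartbeats 1000000



noncomputable def Complex.abs : AbsoluteValue ℂ ℝ :=
  IsAbsoluteValue.toAbsoluteValue (norm : ℂ → ℝ)

lemma Complex.sq_abs (z : ℂ) : Complex.abs z ^ 2 = Complex.normSq z := Complex.sq_norm z

lemma Complex.abs_conj (z : ℂ) : Complex.abs ((starRingEnd ℂ) z) = Complex.abs z :=
  Complex.norm_conj z

lemma Complex.abs_ofReal (r : ℝ) : Complex.abs (r : ℂ) = |r| := by
  show ‖(r : ℂ)‖ = |r|
  simp

lemma Complex.abs_re_le_abs (z : ℂ) : |z.re| ≤ Complex.abs z := Complex.abs_re_le_norm z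

lemma Complex.abs_deriv_le_one_of_mapsTo_ball {f : ℂ → ℂ} {c : ℂ} {R : ℝ}
    (hd : DifferentiableOn ℂ f (ball c R)) (h_maps : MapsTo f (ball c R) (ball c R))
    (h_c : f c = c) (h₀ : 0 < R) : Complex.abs (deriv f c) ≤ 1 :=
  Complex.norm_deriv_le_one_of_mapsTo_ball hd
    (by rw [h_c]; exact h_maps.mono_right ball_subset_closedBall) h₀

lemma cos_re' (τ : ℂ) : (Complex.cos τ).re = Real.cos τ.re * Real.cosh τ.im := by
  rw [Complex.cos_eq]; simp [Complex.cos_ofReal_re, Complex.sin_ofReal_re, Complex.cosh_ofReal_re, Complex.sinh_ofReal_re]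
lemma cos_im' (τ : ℂ) : (Complex.cos τ).im = -(Real.sin τ.re * Real.sinh τ.im) := by
  rw [Complex.cos_eq]; simp [Complex.cos_ofReal_re, Complex.sin_ofReal_re, Complex.cosh_ofReal_re, Complex.sinh_ofReal_re]
lemma sin_re' (τ : ℂ) : (Complex.sin τ).re = Real.sin τ.re * Real.cosh τ.im := by
  rw [Complex.sin_eq]; simp [Complex.cos_ofReal_re, Complex.sin_ofReal_re, Complex.cosh_ofReal_re, Complex.sinh_ofReal_re]
lemma sin_im' (τ : ℂ) : (Complex.sin τ).im = Real.cos τ.re * Real.sinh τ.im := by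
  rw [Complex.sin_eq]; simp [Complex.cos_ofReal_re, Complex.sin_ofReal_re, Complex.cosh_ofReal_re, Complex.sinh_ofReal_re]

lemma normSq_cos_sub_normSq_sin (τ : ℂ) :
    Complex.normSq (Complex.cos τ) - Complex.normSq (Complex.sin τ) = Real.cos (2 * τ.re) := by
  rw [Real.cos_two_mul, Complex.normSq_apply, Complex.normSq_apply,
    cos_re', cos_im', sin_re', sin_im']
  have h1 := Real.sin_sq_add_cos_sq τ.re
  have h2 := Real.cosh_sq_sub_sinh_sq τ.im
  nlinarith [h1, h2]

lemma normSq_lt_one_of_abs_lt_one {c : ℂ} (hc : Complex.abs c < 1) : Complex.normSq c < 1 := by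
  rw [← Complex.sq_abs]; nlinarith [Complex.abs.nonneg c]

lemma normSq_mobius_identity (c w : ℂ) :
    Complex.normSq (1 - (starRingEnd ℂ) c * w) - Complex.normSq (w - c) =
      (1 - Complex.normSq c) * (1 - Complex.normSq w) := by
  simp only [Complex.normSq_apply, Complex.sub_re, Complex.sub_im, Complex.one_re,
    Complex.one_im, Complex.mul_re, Complex.mul_im, Complex.conj_re, Complex.conj_im]
  ring

lemma mobius_abs_lt_one {c w : ℂ} (hc : Complex.abs c < 1) (hw : Complex.abs w < 1) :
    Complex.abs ((w - c) * (1 - (starRingEnd ℂ) c * w)⁻¹) < 1 := by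
  have hc' := normSq_lt_one_of_abs_lt_one hc
  have hw' := normSq_lt_one_of_abs_lt_one hw
  have h1 : Complex.normSq (w - c) < Complex.normSq (1 - (starRingEnd ℂ) c * w) := by
    nlinarith [normSq_mobius_identity c w, Complex.normSq_nonneg c, Complex.normSq_nonneg w]
  have h2 : Complex.abs (w - c) < Complex.abs (1 - (starRingEnd ℂ) c * w) := by
    have e1 := Complex.sq_abs (w - c); have e2 := Complex.sq_abs (1 - (starRingEnd ℂ) c * w)
    nlinarith [Complex.abs.nonneg (w - c), Complex.abs.nonneg (1 - (starRingEnd ℂ) c * w)]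
  have hpos : 0 < Complex.abs (1 - (starRingEnd ℂ) c * w) :=
    lt_of_le_of_lt (Complex.abs.nonneg _) h2
  rw [map_mul, map_inv₀, mul_inv_lt_iff₀ hpos, one_mul]; exact h2

lemma one_sub_conj_mul_ne_zero {c w : ℂ} (hc : Complex.abs c < 1) (hw : Complex.abs w < 1) :
    1 - (starRingEnd ℂ) c * w ≠ 0 := by
  intro h
  rw [sub_eq_zero] at h
  have : Complex.abs ((starRingEnd ℂ) c * w) < 1 := by
    rw [map_mul, Complex.abs_conj]; nlinarith [Complex.abs.nonneg c, Complex.abs.nonneg w]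
  rw [← h] at this; simp at this

lemma cos_pos_of_re (τ : ℂ) (h : |τ.re| < Real.pi / 4) :
    0 < Complex.normSq (Complex.cos τ) - Complex.normSq (Complex.sin τ) := by
  rw [normSq_cos_sub_normSq_sin]
  apply Real.cos_pos_of_mem_Ioo
  constructor <;> [nlinarith [abs_lt.1 h |>.1, Real.pi_pos]; nlinarith [abs_lt.1 h |>.2, Real.pi_pos]]

lemma cos_ne_zero_of_re (τ : ℂ) (h : |τ.re| < Real.pi / 4) : Complex.cos τ ≠ 0 := by
  intro h0
  have := cos_pos_of_re τ h
  rw [h0] at this; simp at this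
  nlinarith [Complex.normSq_nonneg (Complex.sin τ)]

lemma abs_tan_lt_one (τ : ℂ) (h : |τ.re| < Real.pi / 4) : Complex.abs (Complex.tan τ) < 1 := by
  have hc := cos_ne_zero_of_re τ h
  have hp := cos_pos_of_re τ h
  have h1 : Complex.normSq (Complex.tan τ) < 1 := by
    rw [Complex.tan_eq_sin_div_cos, map_div₀]
    rw [div_lt_one ((Complex.normSq_pos).2 hc)]
    nlinarith [Complex.normSq_nonneg (Complex.sin τ)]
  nlinarith [Complex.abs.nonneg (Complex.tan τ), Complex.sq_abs (Complex.tan τ), h1]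

lemma strip_schwarz (α β : ℝ) (hαβ : α < β) (G : ℂ → ℂ)
    (hG : ∀ ζ ∈ ball (0:ℂ) 1, DifferentiableAt ℂ G ζ)
    (hmaps : ∀ ζ ∈ ball (0:ℂ) 1, (G ζ).re ∈ Ioo α β) :
    Real.pi/(β-α) / Real.cos (Real.pi/(β-α) * ((G 0).re - (α+β)/2)) * Complex.abs (deriv G 0)
      ≤ 2 := by
  set c : ℝ := Real.pi/(β-α) with hc
  have hcpos : 0 < c := div_pos Real.pi_pos (by linarith)
  set m : ℝ := (α+β)/2 with hm
  set A : ℂ → ℂ := fun ζ => (((c/2 : ℝ)) : ℂ) * (G ζ - (m:ℂ)) with hA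
  set H : ℂ → ℂ := fun ζ => Complex.tan (A ζ) with hH
  have hAre : ∀ ζ ∈ ball (0:ℂ) 1, (A ζ).re = (c/2) * ((G ζ).re - m) := by
    intro ζ hζ; simp [hA, Complex.mul_re]
  have hAre4 : ∀ ζ ∈ ball (0:ℂ) 1, |(A ζ).re| < Real.pi / 4 := by
    intro ζ hζ
    rw [hAre ζ hζ, abs_mul, abs_of_pos (by positivity)]
    obtain ⟨h1, h2⟩ := hmaps ζ hζ
    have : |(G ζ).re - m| < (β - α)/2 := by rw [abs_lt]; constructor <;> [simp [hm]; simp [hm]] <;> linarith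
    calc c/2 * |(G ζ).re - m| < c/2 * ((β-α)/2) := by
          apply mul_lt_mul_of_pos_left this (by positivity)
      _ = Real.pi / 4 := by
          have hcb : c * (β - α) = Real.pi := by rw [hc, div_mul_cancel₀ _ (by linarith : β - α ≠ 0)]
          nlinarith [hcb]
  have h0mem : (0:ℂ) ∈ ball (0:ℂ) 1 := mem_ball_self one_pos
  have habsH : ∀ ζ ∈ ball (0:ℂ) 1, Complex.abs (H ζ) < 1 := fun ζ hζ =>
    abs_tan_lt_one (A ζ) (hAre4 ζ hζ)
  set c₀ : ℂ := H 0 with hc₀def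
  have hc₀ : Complex.abs c₀ < 1 := habsH 0 h0mem
  set Φ : ℂ → ℂ := fun ζ => (H ζ - c₀) * (1 - (starRingEnd ℂ) c₀ * H ζ)⁻¹ with hΦ
  -- differentiability data
  have hHdiff : ∀ ζ ∈ ball (0:ℂ) 1, HasDerivAt H
      ((1 / Complex.cos (A ζ) ^ 2) * ((((c/2:ℝ)):ℂ) * deriv G ζ)) ζ := by
    intro ζ hζ
    have hAd : HasDerivAt A ((((c/2:ℝ)):ℂ) * deriv G ζ) ζ :=
      (((hG ζ hζ).hasDerivAt.sub_const _).const_mul _)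
    exact (Complex.hasDerivAt_tan (cos_ne_zero_of_re _ (hAre4 ζ hζ))).comp ζ hAd
  have hΦdiff : ∀ ζ ∈ ball (0:ℂ) 1, HasDerivAt Φ
      (((1 / Complex.cos (A ζ) ^ 2) * ((((c/2:ℝ)):ℂ) * deriv G ζ)) *
        (1 - (starRingEnd ℂ) c₀ * H ζ)⁻¹ +
       (H ζ - c₀) * (-(-((starRingEnd ℂ) c₀ *
         ((1 / Complex.cos (A ζ) ^ 2) * ((((c/2:ℝ)):ℂ) * deriv G ζ)))) /
         (1 - (starRingEnd ℂ) c₀ * H ζ) ^ 2)) ζ := by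
    intro ζ hζ
    have hne := one_sub_conj_mul_ne_zero hc₀ (habsH ζ hζ)
    have h1 := (hHdiff ζ hζ).sub_const c₀
    have h2 : HasDerivAt (fun η => 1 - (starRingEnd ℂ) c₀ * H η)
        (-((starRingEnd ℂ) c₀ * ((1 / Complex.cos (A ζ) ^ 2) * ((((c/2:ℝ)):ℂ) * deriv G ζ)))) ζ := by
      exact ((hasDerivAt_const ζ (1:ℂ)).sub ((hHdiff ζ hζ).const_mul ((starRingEnd ℂ) c₀))).congr_deriv (by ring)
    exact h1.mul (h2.inv hne)
  -- Schwarz lemma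
  have hudiff : DifferentiableOn ℂ Φ (ball (0:ℂ) 1) := fun ζ hζ =>
    ((hΦdiff ζ hζ).differentiableAt).differentiableWithinAt
  have hmapsΦ : MapsTo Φ (ball (0:ℂ) 1) (ball (0:ℂ) 1) := by
    intro ζ hζ
    rw [mem_ball_zero_iff]
    exact mobius_abs_lt_one hc₀ (habsH ζ hζ)
  have hΦ0 : Φ 0 = 0 := by simp [hΦ, hc₀def]
  have hschwarz : Complex.abs (deriv Φ 0) ≤ 1 :=
    Complex.abs_deriv_le_one_of_mapsTo_ball hudiff hmapsΦ hΦ0 one_pos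
  -- compute deriv Φ 0
  have hderiv : deriv Φ 0 = ((1 / Complex.cos (A 0) ^ 2) * ((((c/2:ℝ)):ℂ) * deriv G 0)) *
      (1 - (starRingEnd ℂ) c₀ * c₀)⁻¹ := by
    have := (hΦdiff 0 h0mem).deriv
    rw [this]
    simp [hc₀def]
  rw [hderiv] at hschwarz
  -- abs computations
  set τ := A 0 with hτ
  have hcne := cos_ne_zero_of_re τ (hAre4 0 h0mem)
  have hC2pos := cos_pos_of_re τ (hAre4 0 h0mem)
  have hnsq : Complex.normSq c₀ = Complex.normSq (Complex.sin τ) / Complex.normSq (Complex.cos τ) := by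
    rw [hc₀def, hH]
    show Complex.normSq (Complex.tan (A 0)) = _
    rw [Complex.tan_eq_sin_div_cos, map_div₀]
  have hNcpos : 0 < Complex.normSq (Complex.cos τ) := Complex.normSq_pos.2 hcne
  have hone_sub : 1 - (starRingEnd ℂ) c₀ * c₀ = ((1 - Complex.normSq c₀ : ℝ) : ℂ) := by
    rw [mul_comm, Complex.mul_conj]; push_cast; ring
  have hc₀n : Complex.normSq c₀ < 1 := normSq_lt_one_of_abs_lt_one hc₀
  have habs1 : Complex.abs ((1 - (starRingEnd ℂ) c₀ * c₀)⁻¹) = (1 - Complex.normSq c₀)⁻¹ := by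
    rw [map_inv₀, hone_sub, Complex.abs_ofReal, abs_of_pos (by linarith)]
  have habs2 : Complex.abs (1 / Complex.cos τ ^ 2) = 1 / Complex.normSq (Complex.cos τ) := by
    rw [map_div₀, map_one, map_pow, Complex.sq_abs]
  have habs3 : Complex.abs ((((c/2:ℝ)):ℂ) * deriv G 0) = (c/2) * Complex.abs (deriv G 0) := by
    rw [map_mul, Complex.abs_ofReal, abs_of_pos (by positivity)]
  rw [map_mul, map_mul, habs1, habs2, habs3] at hschwarz
  -- final算
  set Nc := Complex.normSq (Complex.cos τ) with hNc
  set Ns := Complex.normSq (Complex.sin τ) with hNs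
  have hC2val : Nc - Ns = Real.cos (2 * τ.re) := normSq_cos_sub_normSq_sin τ
  have hre2 : 2 * τ.re = c * ((G 0).re - m) := by
    rw [hτ, hAre 0 h0mem]; ring
  have hgoalcos : Real.cos (c * ((G 0).re - m)) = Nc - Ns := by rw [hC2val, hre2]
  have hC2pos' : 0 < Nc - Ns := hC2pos
  have h1sub : 1 - Complex.normSq c₀ = (Nc - Ns)/Nc := by rw [hnsq]; field_simp
  rw [h1sub] at hschwarz
  have key : c/2 * Complex.abs (deriv G 0) ≤ (Nc - Ns) := by
    have hd : 1 / Nc * (c / 2 * Complex.abs (deriv G 0)) * ((Nc - Ns) / Nc)⁻¹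
        = (c/2 * Complex.abs (deriv G 0)) / (Nc - Ns) := by
      field_simp
    rw [hd, div_le_one hC2pos'] at hschwarz
    exact hschwarz
  rw [hgoalcos]
  rw [div_mul_eq_mul_div, div_le_iff₀ hC2pos']
  nlinarith [key]

lemma weight_le_density (ω : ℝ → ℝ) (α β : ℝ) (hαβ : α < β)
    (hωpos : ∀ x ∈ Icc α β, 0 < ω x)
    (hωc : ContinuousOn ω (Icc α β))
    (hω1 : ∀ x ∈ Ioo α β, HasDerivAt ω (deriv ω x) x)
    (hω2 : ∀ x ∈ Ioo α β, HasDerivAt (deriv ω) (deriv (deriv ω) x) x)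
    (hcurv : ∀ x ∈ Ioo α β, ω x ^ 4 ≤ ω x * deriv (deriv ω) x - deriv ω x ^ 2)
    (x₀ : ℝ) (hx₀ : x₀ ∈ Ioo α β) :
    ω x₀ ≤ Real.pi/(β-α) / Real.cos (Real.pi/(β-α) * (x₀ - (α+β)/2)) := by
  by_contra hcon
  push_neg at hcon
  set c : ℝ := Real.pi/(β-α) with hc
  have hcpos : 0 < c := div_pos Real.pi_pos (by linarith)
  set m : ℝ := (α+β)/2 with hm
  set θ : ℝ → ℝ := fun x => c * (x - m) with hθ
  have hθα : θ α = -(Real.pi/2) := by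
    have : c * (β - α) = Real.pi := by rw [hc, div_mul_cancel₀ _ (by linarith : β - α ≠ 0)]
    simp only [hθ, hm]; nlinarith [this]
  have hθβ : θ β = Real.pi/2 := by
    have : c * (β - α) = Real.pi := by rw [hc, div_mul_cancel₀ _ (by linarith : β - α ≠ 0)]
    simp only [hθ, hm]; nlinarith [this]
  have hθmono : StrictMono θ := fun x y hxy => by
    simp only [hθ]; nlinarith [hxy]
  have hcosθ : ∀ x ∈ Ioo α β, 0 < Real.cos (θ x) := by
    intro x hx
    apply Real.cos_pos_of_mem_Ioo
    constructor
    · rw [← hθα]; exact hθmono hx.1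
    · rw [← hθβ]; exact hθmono hx.2
  set lam : ℝ → ℝ := fun x => c / Real.cos (θ x) with hlam
  have hlampos : ∀ x ∈ Ioo α β, 0 < lam x := fun x hx => div_pos hcpos (hcosθ x hx)
  set h : ℝ → ℝ := fun x => Real.log (ω x) - Real.log c + Real.log (Real.cos (θ x)) with hh
  have hlogform : ∀ x ∈ Ioo α β, h x = Real.log (ω x) - Real.log (lam x) := by
    intro x hx
    rw [hlam]
    simp only [hh]
    rw [Real.log_div (ne_of_gt hcpos) (ne_of_gt (hcosθ x hx))]
    ring
  -- h x₀ > 0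
  have hωx₀pos := hωpos x₀ (Ioo_subset_Icc_self hx₀)
  have hpos₀ : 0 < h x₀ := by
    rw [hlogform x₀ hx₀, sub_pos]
    exact Real.log_lt_log (hlampos x₀ hx₀) hcon
  -- derivative data
  have hθd : ∀ x : ℝ, HasDerivAt θ c x := by
    intro x
    simpa using (((hasDerivAt_id x).sub_const m).const_mul c)
  set hd : ℝ → ℝ := fun x => (ω x)⁻¹ * deriv ω x + (Real.cos (θ x))⁻¹ * (-Real.sin (θ x) * c)
    with hhd
  have hcosd : ∀ x : ℝ, HasDerivAt (fun y => Real.cos (θ y)) (-Real.sin (θ x) * c) x := by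
    intro x
    exact (Real.hasDerivAt_cos (θ x)).comp x (hθd x)
  have hh' : ∀ x ∈ Ioo α β, HasDerivAt h (hd x) x := by
    intro x hx
    have hωx := hωpos x (Ioo_subset_Icc_self hx)
    have p1 : HasDerivAt (fun y => Real.log (ω y)) ((ω x)⁻¹ * deriv ω x) x :=
      (Real.hasDerivAt_log (ne_of_gt hωx)).comp x (hω1 x hx)
    have p2 : HasDerivAt (fun y => Real.log (Real.cos (θ y)))
        ((Real.cos (θ x))⁻¹ * (-Real.sin (θ x) * c)) x := by
      have := (Real.hasDerivAt_log (ne_of_gt (hcosθ x hx))).comp x (hcosd x); exact this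
    exact (p1.sub_const (Real.log c)).add p2
  -- second derivative of h at a point, with positivity when h > 0
  have hh'' : ∀ x ∈ Ioo α β, ∃ E : ℝ, HasDerivAt hd E x ∧ (0 < h x → 0 < E) := by
    intro x hx
    have hωx := hωpos x (Ioo_subset_Icc_self hx)
    have hcx := hcosθ x hx
    have p1 : HasDerivAt (fun y => (ω y)⁻¹) (-(deriv ω x) / (ω x)^2) x :=
      (hω1 x hx).inv (ne_of_gt hωx)
    have p2 := p1.mul (hω2 x hx)
    have q1 : HasDerivAt (fun y => (Real.cos (θ y))⁻¹)
        (-(-Real.sin (θ x) * c) / (Real.cos (θ x))^2) x :=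
      (hcosd x).inv (ne_of_gt hcx)
    have q2 : HasDerivAt (fun y => -Real.sin (θ y) * c) (-(Real.cos (θ x) * c) * c) x := by
      exact (((Real.hasDerivAt_sin (θ x)).comp x (hθd x)).neg).mul_const c
    have q3 := q1.mul q2
    refine ⟨_, p2.add q3, ?_⟩
    intro hhx
    -- from h x > 0 : ω x > lam x
    have hωgt : lam x < ω x := by
      have := hlogform x hx
      rw [this] at hhx
      have := Real.exp_lt_exp.2 (by linarith : Real.log (lam x) < Real.log (ω x))
      rwa [Real.exp_log (hlampos x hx), Real.exp_log hωx] at this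
    -- E = (W2 ω - W²)/ω² - c²/cos² ≥ ω² - lam² > 0
    have hcurvx := hcurv x hx
    have hsc := Real.sin_sq_add_cos_sq (θ x)
    have hlamx : lam x = c / Real.cos (θ x) := rfl
    have hlsq : lam x ^ 2 = c^2 / Real.cos (θ x)^2 := by rw [hlamx]; rw [div_pow]
    have hE1 : -(deriv ω x) / (ω x)^2 * deriv ω x + (ω x)⁻¹ * deriv (deriv ω) x +
        (-(-Real.sin (θ x) * c) / (Real.cos (θ x))^2 * (-Real.sin (θ x) * c) +
          (Real.cos (θ x))⁻¹ * (-(Real.cos (θ x) * c) * c))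
        = (ω x * deriv (deriv ω) x - deriv ω x ^ 2)/(ω x)^2
          - (c^2 * Real.sin (θ x)^2 / Real.cos (θ x)^2 + c^2) := by
      field_simp
      ring
    have hstep1 : (ω x)^2 ≤ (ω x * deriv (deriv ω) x - deriv ω x ^ 2)/(ω x)^2 :=
      (le_div_iff₀ (by positivity)).2 (by nlinarith)
    have hstep2 : c^2 * Real.sin (θ x)^2 / Real.cos (θ x)^2 + c^2 = lam x ^ 2 := by
      have hs2 : Real.sin (θ x)^2 = 1 - Real.cos (θ x)^2 := by nlinarith [hsc]
      rw [hlsq, hs2]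
      field_simp
      ring
    have hstep3 : lam x ^ 2 < (ω x)^2 := by nlinarith [hlampos x hx]
    rw [hE1, hstep2]
    linarith
  -- tendsto atBot at both endpoints
  have hcosα : Real.cos (θ α) = 0 := by rw [hθα, Real.cos_neg, Real.cos_pi_div_two]
  have hcosβ : Real.cos (θ β) = 0 := by rw [hθβ, Real.cos_pi_div_two]
  have hcoscont : Continuous fun x => Real.cos (θ x) :=
    Real.continuous_cos.comp (continuous_const.mul (continuous_id.sub continuous_const))
  have hbdd : ∀ (e : ℝ) (he : e ∈ Icc α β) (hce : Real.cos (θ e) = 0),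
      Tendsto h (𝓝[Ioo α β] e) atBot := by
    intro e he hce
    have t1 : Tendsto (fun x => Real.cos (θ x)) (𝓝[Ioo α β] e) (𝓝[>] 0) := by
      apply tendsto_nhdsWithin_of_tendsto_nhds_of_eventually_within
      · exact tendsto_nhdsWithin_of_tendsto_nhds (hcoscont.tendsto' e 0 hce)
      · filter_upwards [self_mem_nhdsWithin] with x hx
        exact hcosθ x hx
    have t2 : Tendsto (fun x => Real.log (Real.cos (θ x))) (𝓝[Ioo α β] e) atBot :=
      Real.tendsto_log_nhdsGT_zero.comp t1
    have t3 : Tendsto (fun x => Real.log (ω x) - Real.log c) (𝓝[Ioo α β] e)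
        (𝓝 (Real.log (ω e) - Real.log c)) := by
      apply Tendsto.sub_const
      have hω : Tendsto ω (𝓝[Ioo α β] e) (𝓝 (ω e)) :=
        (hωc.continuousWithinAt he).mono Ioo_subset_Icc_self
      exact ((Real.continuousAt_log (ne_of_gt (hωpos e he))).tendsto).comp hω
    exact t3.add_atBot t2
  have htα := hbdd α ⟨le_refl _, le_of_lt hαβ⟩ hcosα
  have htβ := hbdd β ⟨le_of_lt hαβ, le_refl _⟩ hcosβ
  -- extract α' and β'
  have hev : ∀ᶠ x in 𝓝[Ioo α β] α, h x < h x₀ := htα.eventually (eventually_lt_atBot (h x₀))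
  have hev' : ∀ᶠ x in 𝓝[Ioo α β] β, h x < h x₀ := htβ.eventually (eventually_lt_atBot (h x₀))
  obtain ⟨U, hUopen, hUα, hUsub⟩ := mem_nhdsWithin.1 hev
  obtain ⟨V, hVopen, hVβ, hVsub⟩ := mem_nhdsWithin.1 hev'
  obtain ⟨εα, hεα, hballU⟩ := Metric.isOpen_iff.1 hUopen α hUα
  obtain ⟨εβ, hεβ, hballV⟩ := Metric.isOpen_iff.1 hVopen β hVβ
  set α' : ℝ := min (α + εα/2) ((α + x₀)/2) with hα'
  set β' : ℝ := max (β - εβ/2) ((β + x₀)/2) with hβ'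
  have hαα' : α < α' := lt_min (by linarith) (by nlinarith [hx₀.1])
  have hα'x₀ : α' < x₀ := lt_of_le_of_lt (min_le_right _ _) (by nlinarith [hx₀.1])
  have hx₀β' : x₀ < β' := lt_of_lt_of_le (by nlinarith [hx₀.2]) (le_max_right _ _)
  have hβ'β : β' < β := max_lt (by linarith) (by nlinarith [hx₀.2])
  have hleftsmall : ∀ x ∈ Ioo α β, x ≤ α' → h x < h x₀ := by
    intro x hx hxle
    apply hUsub
    constructor
    · apply hballU
      rw [Metric.mem_ball, Real.dist_eq, abs_of_pos (by linarith [hx.1] : (0:ℝ) < x - α)]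
      have : α' ≤ α + εα/2 := min_le_left _ _
      linarith
    · exact hx
  have hrightsmall : ∀ x ∈ Ioo α β, β' ≤ x → h x < h x₀ := by
    intro x hx hxle
    apply hVsub
    constructor
    · apply hballV
      rw [Metric.mem_ball, Real.dist_eq, abs_of_neg (by linarith [hx.2] : x - β < (0:ℝ))]
      have : β - εβ/2 ≤ β' := le_max_left _ _
      linarith
    · exact hx
  -- maximum on [α', β']
  have hKsub : Icc α' β' ⊆ Ioo α β := fun y hy => ⟨lt_of_lt_of_le hαα' hy.1,
    lt_of_le_of_lt hy.2 hβ'β⟩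
  have hcontK : ContinuousOn h (Icc α' β') := fun x hx =>
    ((hh' x (hKsub hx)).continuousAt).continuousWithinAt
  obtain ⟨xs, hxsK, hmax⟩ := isCompact_Icc.exists_isMaxOn
    ⟨x₀, ⟨le_of_lt hα'x₀, le_of_lt hx₀β'⟩⟩ hcontK
  have hxsIoo : xs ∈ Ioo α β := hKsub hxsK
  have hx₀le : h x₀ ≤ h xs := hmax ⟨le_of_lt hα'x₀, le_of_lt hx₀β'⟩
  have hglobal : ∀ y ∈ Ioo α β, h y ≤ h xs := by
    intro y hy
    by_cases hyK : y ∈ Icc α' β'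
    · exact hmax hyK
    · rw [mem_Icc, not_and_or, not_le, not_le] at hyK
      rcases hyK with hy1 | hy2
      · linarith [hleftsmall y hy (le_of_lt hy1)]
      · linarith [hrightsmall y hy (le_of_lt hy2)]
  have hlocal : IsLocalMax h xs :=
    Filter.eventually_of_mem (isOpen_Ioo.mem_nhds hxsIoo) (fun y hy => hglobal y hy)
  have hd0 : hd xs = 0 := hlocal.hasDerivAt_eq_zero (hh' xs hxsIoo)
  obtain ⟨E, hE, hEpos'⟩ := hh'' xs hxsIoo
  have hEpos : 0 < E := hEpos' (lt_of_lt_of_le hpos₀ hx₀le)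
  -- derivative of hd positive at xs, value 0 ⇒ hd > 0 just to the right
  have hslope := hasDerivAt_iff_tendsto_slope.1 hE
  have hevpos : ∀ᶠ t in 𝓝[>] xs, 0 < hd t := by
    have h1 : ∀ᶠ t in 𝓝[≠] xs, 0 < slope hd xs t :=
      hslope.eventually (eventually_gt_nhds hEpos)
    have h2 : ∀ᶠ t in 𝓝[>] xs, 0 < slope hd xs t :=
      h1.filter_mono (nhdsWithin_mono _ (fun t ht => ne_of_gt ht))
    filter_upwards [h2, self_mem_nhdsWithin] with t ht hts
    rw [slope_def_field, hd0, sub_zero] at ht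
    rw [mem_Ioi] at hts
    have := mul_pos ht (by linarith : (0:ℝ) < t - xs)
    rwa [div_mul_cancel₀ _ (by linarith : t - xs ≠ 0)] at this
  have hevIoo : ∀ᶠ t in 𝓝[>] xs, t ∈ Ioo α β :=
    eventually_nhdsWithin_of_eventually_nhds (isOpen_Ioo.eventually_mem hxsIoo)
  obtain ⟨u, hu, husub⟩ := mem_nhdsGT_iff_exists_Ioo_subset.1 (hevpos.and hevIoo)
  rw [mem_Ioi] at hu
  set t₁ : ℝ := (xs + u)/2 with ht₁
  have ht₁mem : t₁ ∈ Ioo xs u := ⟨by linarith, by linarith⟩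
  have hsubIoo : Icc xs t₁ ⊆ Ioo α β := by
    intro y hy
    rcases eq_or_lt_of_le hy.1 with rfl | hlt
    · exact hxsIoo
    · exact (husub ⟨hlt, lt_of_le_of_lt hy.2 ht₁mem.2⟩).2
  have hmono : StrictMonoOn h (Icc xs t₁) := by
    apply strictMonoOn_of_deriv_pos (convex_Icc _ _)
    · exact fun x hx => ((hh' x (hsubIoo hx)).continuousAt).continuousWithinAt
    · intro x hx
      rw [interior_Icc] at hx
      rw [(hh' x (hsubIoo (Ioo_subset_Icc_self hx))).deriv]
      exact (husub ⟨hx.1, lt_trans hx.2 ht₁mem.2⟩).1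
  have : h xs < h t₁ := hmono ⟨le_refl _, by linarith⟩ ⟨by linarith, le_refl _⟩ (by linarith)
  have := hglobal t₁ (hsubIoo ⟨by linarith, le_refl _⟩)
  linarith

lemma deriv_bound_center (J : Set ℝ) (hJo : IsOpen J) (hJc : Set.OrdConnected J)
    (ω : ℝ → ℝ) (hωpos : ∀ t ∈ J, 0 < ω t) (hωC2 : ContDiffOn ℝ 2 ω J)
    (hcurv : ∀ t ∈ J, (deriv ω t ^ 2 - ω t * deriv (deriv ω) t) / ω t ^ 4 ≤ -1)
    (F : ℂ → ℂ) (hF : ∀ ζ ∈ ball (0:ℂ) 1, DifferentiableAt ℂ F ζ)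
    (hRe : ∀ ζ ∈ ball (0:ℂ) 1, (F ζ).re ∈ J) :
    ω ((F 0).re) * Complex.abs (deriv F 0) ≤ 2 := by
  -- derivative data for ω on J
  have hJ1 : ∀ x ∈ J, HasDerivAt ω (deriv ω x) x := by
    intro x hx
    exact ((hωC2.differentiableOn (by norm_num)).differentiableAt (hJo.mem_nhds hx)).hasDerivAt
  have hd1 : ContDiffOn ℝ 1 (deriv ω) J := hωC2.deriv_of_isOpen hJo (by norm_num)
  have hJ2 : ∀ x ∈ J, HasDerivAt (deriv ω) (deriv (deriv ω) x) x := by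
    intro x hx
    exact ((hd1.differentiableOn (by norm_num)).differentiableAt (hJo.mem_nhds hx)).hasDerivAt
  have hcurv' : ∀ x ∈ J, ω x ^ 4 ≤ ω x * deriv (deriv ω) x - deriv ω x ^ 2 := by
    intro x hx
    have hp : (0:ℝ) < ω x ^ 4 := pow_pos (hωpos x hx) 4
    have := (div_le_iff₀ hp).1 (hcurv x hx)
    nlinarith [this]
  set x₀ : ℝ := (F 0).re with hx₀def
  have h0mem : (0:ℂ) ∈ ball (0:ℂ) 1 := mem_ball_self one_pos
  have key : ∀ r : ℝ, 0 < r → r < 1 → ω x₀ * Complex.abs (deriv F 0) * r ≤ 2 := by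
    intro r hr0 hr1
    have hsub : closedBall (0:ℂ) r ⊆ ball (0:ℂ) 1 := closedBall_subset_ball hr1
    set K : Set ℝ := (fun ζ : ℂ => (F ζ).re) '' closedBall (0:ℂ) r with hK
    have hFc : ContinuousOn (fun ζ : ℂ => (F ζ).re) (closedBall (0:ℂ) r) :=
      Complex.continuous_re.comp_continuousOn
        (fun ζ hζ => (hF ζ (hsub hζ)).continuousAt.continuousWithinAt)
    have hKcomp : IsCompact K := (isCompact_closedBall _ _).image_of_continuousOn hFc
    have hKne : K.Nonempty := ⟨x₀, mem_image_of_mem _ (mem_closedBall_self (le_of_lt hr0))⟩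
    have hKJ : K ⊆ J := by
      rintro y ⟨ζ, hζ, rfl⟩
      exact hRe ζ (hsub hζ)
    set a₀ : ℝ := sInf K with ha₀
    set b₀ : ℝ := sSup K with hb₀
    have ha₀K : a₀ ∈ K := hKcomp.sInf_mem hKne
    have hb₀K : b₀ ∈ K := hKcomp.sSup_mem hKne
    obtain ⟨εa, hεa, hballa⟩ := Metric.isOpen_iff.1 hJo a₀ (hKJ ha₀K)
    obtain ⟨εb, hεb, hballb⟩ := Metric.isOpen_iff.1 hJo b₀ (hKJ hb₀K)
    set ε : ℝ := min εa εb / 2 with hε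
    have hεpos : 0 < ε := by
      have := lt_min hεa hεb
      rw [hε]; linarith
    set α : ℝ := a₀ - ε with hα
    set β : ℝ := b₀ + ε with hβ
    have hαJ : α ∈ J := by
      apply hballa
      rw [Metric.mem_ball, Real.dist_eq]
      have : ε < εa := by
        have := min_le_left εa εb
        simp only [hε]; linarith
      rw [hα]; rw [abs_of_nonpos (by linarith)]; linarith
    have hβJ : β ∈ J := by
      apply hballb
      rw [Metric.mem_ball, Real.dist_eq]
      have : ε < εb := by
        have := min_le_right εa εb
        simp only [hε]; linarith
      rw [hβ]; rw [_root_.abs_of_nonneg (by linarith)]; linarith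
    have hIccJ : Icc α β ⊆ J := hJc.out hαJ hβJ
    have ha₀b₀ : a₀ ≤ b₀ := csInf_le_csSup hKne hKcomp.bddBelow hKcomp.bddAbove
    have hαβ : α < β := by rw [hα, hβ]; linarith
    have hKIoo : K ⊆ Ioo α β := by
      intro y hy
      constructor
      · rw [hα]; linarith [csInf_le hKcomp.bddBelow hy]
      · rw [hβ]; linarith [le_csSup hKcomp.bddAbove hy]
    -- the rescaled map G
    set G : ℂ → ℂ := fun ζ => F ((r:ℂ) * ζ) with hG
    have hrmem : ∀ ζ : ℂ, ζ ∈ ball (0:ℂ) 1 → (r:ℂ) * ζ ∈ closedBall (0:ℂ) r := by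
      intro ζ hζ
      rw [mem_ball_zero_iff] at hζ
      rw [mem_closedBall_zero_iff, norm_mul, Complex.norm_real, Real.norm_eq_abs,
        abs_of_pos hr0]
      nlinarith [norm_nonneg ζ]
    have hGd : ∀ ζ ∈ ball (0:ℂ) 1, DifferentiableAt ℂ G ζ := by
      intro ζ hζ
      exact (hF _ (hsub (hrmem ζ hζ))).comp ζ ((differentiable_id.const_mul _).differentiableAt)
    have hGmaps : ∀ ζ ∈ ball (0:ℂ) 1, (G ζ).re ∈ Ioo α β := by
      intro ζ hζ
      exact hKIoo (mem_image_of_mem _ (hrmem ζ hζ))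
    have hss := strip_schwarz α β hαβ G hGd hGmaps
    have hG0 : G 0 = F 0 := by simp [hG]
    have hGderiv : deriv G 0 = deriv F 0 * r := by
      have hmul : HasDerivAt (fun ζ : ℂ => (r:ℂ) * ζ) (r:ℂ) 0 := by
        simpa using (hasDerivAt_id (0:ℂ)).const_mul (r:ℂ)
      have : HasDerivAt G (deriv F ((r:ℂ) * 0) * r) 0 :=
        ((hF _ (hsub (hrmem 0 h0mem))).hasDerivAt).comp 0 hmul
      rw [mul_zero] at this
      exact this.deriv
    rw [hG0, hGderiv] at hss
    -- comparison
    have hws := weight_le_density ω α β hαβ (fun x hx => hωpos x (hIccJ hx))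
      (hωC2.continuousOn.mono hIccJ)
      (fun x hx => hJ1 x (hIccJ (Ioo_subset_Icc_self hx)))
      (fun x hx => hJ2 x (hIccJ (Ioo_subset_Icc_self hx)))
      (fun x hx => hcurv' x (hIccJ (Ioo_subset_Icc_self hx)))
      x₀ (hKIoo (mem_image_of_mem _ (mem_closedBall_self (le_of_lt hr0))))
    have habsr : Complex.abs (deriv F 0 * r) = Complex.abs (deriv F 0) * r := by
      rw [map_mul, Complex.abs_ofReal, abs_of_pos hr0]
    rw [habsr] at hss
    calc ω x₀ * Complex.abs (deriv F 0) * r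
        ≤ (Real.pi/(β-α) / Real.cos (Real.pi/(β-α) * (x₀ - (α+β)/2))) *
            (Complex.abs (deriv F 0) * r) := by
          rw [mul_assoc]
          apply mul_le_mul_of_nonneg_right hws (by positivity)
      _ ≤ 2 := by rw [← mul_assoc] at hss ⊢; exact hss
  -- pass to the limit r → 1⁻
  have htend : Tendsto (fun r : ℝ => ω x₀ * Complex.abs (deriv F 0) * r) (𝓝[<] (1:ℝ))
      (𝓝 (ω x₀ * Complex.abs (deriv F 0))) := by
    have := (tendsto_id.const_mul (ω x₀ * Complex.abs (deriv F 0))).mono_left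
      (nhdsWithin_le_nhds : 𝓝[<] (1:ℝ) ≤ 𝓝 1)
    simpa using this
  apply le_of_tendsto htend
  filter_upwards [Ioo_mem_nhdsLT_of_mem (⟨by norm_num, le_refl _⟩ : (1:ℝ) ∈ Ioc (0:ℝ) 1)]
    with r hr
  exact key r hr.1 hr.2

lemma mobius_shift_abs_lt_one {c η : ℂ} (hc : Complex.abs c < 1) (hη : Complex.abs η < 1) :
    Complex.abs ((η + c) * (1 + (starRingEnd ℂ) c * η)⁻¹) < 1 := by
  have h := mobius_abs_lt_one (c := -c) (w := η) (by rwa [AbsoluteValue.map_neg]) hη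
  rw [map_neg] at h
  simpa [sub_neg_eq_add] using h

lemma one_add_conj_mul_ne_zero {c η : ℂ} (hc : Complex.abs c < 1) (hη : Complex.abs η < 1) :
    1 + (starRingEnd ℂ) c * η ≠ 0 := by
  have h := one_sub_conj_mul_ne_zero (c := -c) (w := η) (by rwa [AbsoluteValue.map_neg]) hη
  rw [map_neg] at h
  simpa [sub_neg_eq_add] using h

lemma mobius_shift_hasDerivAt {c η : ℂ} (hc : Complex.abs c < 1) (hη : Complex.abs η < 1) :
    HasDerivAt (fun η' => (η' + c) * (1 + (starRingEnd ℂ) c * η')⁻¹)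
      ((1 + (starRingEnd ℂ) c * η)⁻¹ +
        (η + c) * (-((starRingEnd ℂ) c) / (1 + (starRingEnd ℂ) c * η) ^ 2)) η := by
  have hne := one_add_conj_mul_ne_zero hc hη
  have h1 : HasDerivAt (fun η' : ℂ => η' + c) 1 η := (hasDerivAt_id η).add_const c
  have h2 : HasDerivAt (fun η' : ℂ => 1 + (starRingEnd ℂ) c * η') ((starRingEnd ℂ) c) η := by
    exact ((hasDerivAt_const η (1:ℂ)).add ((hasDerivAt_id η).const_mul ((starRingEnd ℂ) c))).congr_deriv (by ring)
  have h3 := h2.inv hne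
  have := h1.mul h3
  exact this.congr_deriv (by rw [one_mul]; rfl)

lemma deriv_bound_pt (J : Set ℝ) (hJo : IsOpen J) (hJc : Set.OrdConnected J)
    (ω : ℝ → ℝ) (hωpos : ∀ t ∈ J, 0 < ω t) (hωC2 : ContDiffOn ℝ 2 ω J)
    (hcurv : ∀ t ∈ J, (deriv ω t ^ 2 - ω t * deriv (deriv ω) t) / ω t ^ 4 ≤ -1)
    (F : ℂ → ℂ) (hF : ∀ ζ ∈ ball (0:ℂ) 1, DifferentiableAt ℂ F ζ)
    (hRe : ∀ ζ ∈ ball (0:ℂ) 1, (F ζ).re ∈ J)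
    (ζ : ℂ) (hζ : ζ ∈ ball (0:ℂ) 1) :
    ω ((F ζ).re) * (Complex.abs (deriv F ζ) * (1 - Complex.normSq ζ)) ≤ 2 := by
  have hζa : Complex.abs ζ < 1 := mem_ball_zero_iff.1 hζ
  set φ : ℂ → ℂ := fun η => (η + ζ) * (1 + (starRingEnd ℂ) ζ * η)⁻¹ with hφ
  have hφmaps : ∀ η ∈ ball (0:ℂ) 1, φ η ∈ ball (0:ℂ) 1 := by
    intro η hη
    exact mem_ball_zero_iff.2 (mobius_shift_abs_lt_one hζa (mem_ball_zero_iff.1 hη))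
  have hφdiff : ∀ η ∈ ball (0:ℂ) 1, DifferentiableAt ℂ φ η := by
    intro η hη
    exact (mobius_shift_hasDerivAt hζa (mem_ball_zero_iff.1 hη)).differentiableAt
  set G : ℂ → ℂ := fun η => F (φ η) with hG
  have h0mem : (0:ℂ) ∈ ball (0:ℂ) 1 := mem_ball_self one_pos
  have hφ0 : φ 0 = ζ := by simp [hφ]
  have hGd : ∀ η ∈ ball (0:ℂ) 1, DifferentiableAt ℂ G η := by
    intro η hη
    exact (hF _ (hφmaps η hη)).comp η (hφdiff η hη)
  have hGRe : ∀ η ∈ ball (0:ℂ) 1, (G η).re ∈ J := fun η hη => hRe _ (hφmaps η hη)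
  have hcb := deriv_bound_center J hJo hJc ω hωpos hωC2 hcurv G hGd hGRe
  have hG0 : G 0 = F ζ := by rw [hG]; simp only; rw [hφ0]
  have hφd0 : HasDerivAt φ (1 - (starRingEnd ℂ) ζ * ζ) 0 := by
    have := mobius_shift_hasDerivAt hζa (by simpa using one_pos : Complex.abs (0:ℂ) < 1)
    have h2 : ((1 + (starRingEnd ℂ) ζ * 0)⁻¹ +
        (0 + ζ) * (-((starRingEnd ℂ) ζ) / (1 + (starRingEnd ℂ) ζ * 0) ^ 2))
        = 1 - (starRingEnd ℂ) ζ * ζ := by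
      simp
      ring
    rw [h2] at this
    exact this
  have hGd0 : HasDerivAt G (deriv F ζ * (1 - (starRingEnd ℂ) ζ * ζ)) 0 := by
    have hFd : HasDerivAt F (deriv F ζ) (φ 0) := by rw [hφ0]; exact (hF ζ hζ).hasDerivAt
    have := hFd.comp 0 hφd0
    rw [hG]
    exact this
  have hderivG : deriv G 0 = deriv F ζ * (1 - (starRingEnd ℂ) ζ * ζ) := hGd0.deriv
  rw [hG0, hderivG] at hcb
  have habs : Complex.abs (deriv F ζ * (1 - (starRingEnd ℂ) ζ * ζ))
      = Complex.abs (deriv F ζ) * (1 - Complex.normSq ζ) := by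
    rw [map_mul]
    congr 1
    have h1 : 1 - (starRingEnd ℂ) ζ * ζ = ((1 - Complex.normSq ζ : ℝ) : ℂ) := by
      rw [mul_comm, Complex.mul_conj]; push_cast; ring
    rw [h1, Complex.abs_ofReal,
      _root_.abs_of_pos (by linarith [normSq_lt_one_of_abs_lt_one hζa])]
  rw [habs] at hcb
  exact hcb

/-- Let J = (a,b) ⊊ ℝ (a < b extended reals), let ω be a positive C²
weight on J with (ω'² − ω·ω'')/ω⁴ ≤ −1, and let f be holomorphic on the unit disk
with Re f ∈ J. Then d_ω(Re f(z), Re f(w)) ≤ σ(z, w). -/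
theorem re_holomorphic_dist_decreasing (a b : EReal) (hab : a < b)
    (J : Set ℝ) (hJ : J = {t : ℝ | a < (t : EReal) ∧ (t : EReal) < b})
    (hJne : J ≠ Set.univ)
    (ω : ℝ → ℝ) (hωpos : ∀ t ∈ J, 0 < ω t) (hωC2 : ContDiffOn ℝ 2 ω J)
    (hcurv : ∀ t ∈ J, (deriv ω t ^ 2 - ω t * deriv (deriv ω) t) / ω t ^ 4 ≤ -1)
    (f : ℂ → ℂ)
    (hf : ∀ z ∈ Metric.ball (0 : ℂ) 1, DifferentiableAt ℂ f z)
    (hRe : ∀ z ∈ Metric.ball (0 : ℂ) 1, (f z).re ∈ J)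
    (z w : ℂ) (hz : z ∈ Metric.ball (0 : ℂ) 1) (hw : w ∈ Metric.ball (0 : ℂ) 1) :
    |∫ t in (f w).re..(f z).re, ω t| ≤ hypDist z w := by
  -- structure of J
  have hJo : IsOpen J := by
    rw [hJ]
    have : {t : ℝ | a < (t : EReal) ∧ (t : EReal) < b}
        = (fun t : ℝ => (t : EReal)) ⁻¹' (Ioo a b) := rfl
    rw [this]
    exact (isOpen_Ioo).preimage continuous_coe_real_ereal
  have hJc : Set.OrdConnected J := by
    rw [hJ]
    constructor
    intro x hx y hy t ht
    constructor
    · exact lt_of_lt_of_le hx.1 (EReal.coe_le_coe_iff.2 ht.1)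
    · exact lt_of_le_of_lt (EReal.coe_le_coe_iff.2 ht.2) hy.2
  have hza : Complex.abs z < 1 := mem_ball_zero_iff.1 hz
  have hwa : Complex.abs w < 1 := mem_ball_zero_iff.1 hw
  -- the Möbius change of variable
  set u : ℂ := (z - w) * (1 - (starRingEnd ℂ) w * z)⁻¹ with hu
  set ρ : ℝ := Complex.abs u with hρ
  have hρ1 : ρ < 1 := mobius_abs_lt_one hwa hza
  have hρ0 : 0 ≤ ρ := Complex.abs.nonneg u
  have hρeq : ρ = pseudoHypDist z w := by
    rw [hρ, hu, pseudoHypDist, map_mul, map_inv₀]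
    rw [div_eq_mul_inv]
    congr 2
    have hconj : (starRingEnd ℂ) (1 - (starRingEnd ℂ) w * z) = 1 - (starRingEnd ℂ) z * w := by
      rw [map_sub, map_one, map_mul, Complex.conj_conj]; ring
    rw [← hconj, Complex.norm_conj]; rfl
  set φ : ℂ → ℂ := fun η => (η + w) * (1 + (starRingEnd ℂ) w * η)⁻¹ with hφ
  have hφ0 : φ 0 = w := by simp [hφ]
  have hφu : φ u = z := by
    rw [hφ, hu]
    have hd : 1 - (starRingEnd ℂ) w * z ≠ 0 := one_sub_conj_mul_ne_zero hwa hza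
    have hnw : 1 - (starRingEnd ℂ) w * w ≠ 0 := one_sub_conj_mul_ne_zero hwa hwa
    have hden : 1 + (starRingEnd ℂ) w * ((z - w) * (1 - (starRingEnd ℂ) w * z)⁻¹)
        = (1 - (starRingEnd ℂ) w * w) * (1 - (starRingEnd ℂ) w * z)⁻¹ := by
      field_simp
      ring
    simp only
    rw [hden]
    have hd' : 1 - z * (starRingEnd ℂ) w ≠ 0 := by rwa [mul_comm]
    have hnw' : 1 - w * (starRingEnd ℂ) w ≠ 0 := by rwa [mul_comm]
    field_simp
    ring
  set F : ℂ → ℂ := fun η => f (φ η) with hF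
  have hφmaps : ∀ η ∈ ball (0:ℂ) 1, φ η ∈ ball (0:ℂ) 1 := fun η hη =>
    mem_ball_zero_iff.2 (mobius_shift_abs_lt_one hwa (mem_ball_zero_iff.1 hη))
  have hφdiff : ∀ η ∈ ball (0:ℂ) 1, DifferentiableAt ℂ φ η := fun η hη =>
    (mobius_shift_hasDerivAt hwa (mem_ball_zero_iff.1 hη)).differentiableAt
  have hFd : ∀ η ∈ ball (0:ℂ) 1, DifferentiableAt ℂ F η := fun η hη =>
    (hf _ (hφmaps η hη)).comp η (hφdiff η hη)
  have hFRe : ∀ η ∈ ball (0:ℂ) 1, (F η).re ∈ J := fun η hη => hRe _ (hφmaps η hη)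
  -- the path s ↦ s*u and its real part
  have hsu : ∀ s : ℝ, s ∈ Icc (0:ℝ) 1 → (s:ℂ) * u ∈ ball (0:ℂ) 1 := by
    intro s hs
    rw [mem_ball_zero_iff]
    calc ‖(s:ℂ) * u‖ = |s| * ρ := by
          rw [norm_mul, Complex.norm_real, Real.norm_eq_abs]; rfl
      _ ≤ 1 * ρ := by
          apply mul_le_mul_of_nonneg_right _ hρ0
          rw [abs_le]; constructor <;> linarith [hs.1, hs.2]
      _ < 1 := by linarith
  set g : ℝ → ℝ := fun s => (F ((s:ℂ) * u)).re with hg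
  set gd : ℝ → ℝ := fun s => (deriv F ((s:ℂ) * u) * u).re with hgd
  have hg0 : g 0 = (f w).re := by simp [hg, hF, hφ0]
  have hg1 : g 1 = (f z).re := by
    have : ((1:ℝ):ℂ) * u = u := by norm_num
    rw [hg]; simp only [this]; rw [hF]; simp only; rw [hφu]
  have hgderiv : ∀ s ∈ Icc (0:ℝ) 1, HasDerivAt g (gd s) s := by
    intro s hs
    have hmem := hsu s hs
    have hinner : HasDerivAt (fun ξ : ℂ => ξ * u) u (s:ℂ) := hasDerivAt_mul_const u
    have hFd' : HasDerivAt F (deriv F ((s:ℂ)*u)) ((s:ℂ)*u) := (hFd _ hmem).hasDerivAt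
    have hE : HasDerivAt (fun ξ : ℂ => F (ξ * u)) (deriv F ((s:ℂ)*u) * u) (s:ℂ) :=
      by have := hFd'.comp (s:ℂ) hinner; exact this
    have hEr : HasDerivAt (fun t : ℝ => F ((t:ℂ) * u)) (deriv F ((s:ℂ)*u) * u) s :=
      hE.comp_ofReal
    exact Complex.reCLM.hasFDerivAt.comp_hasDerivAt s hEr
  -- continuity of gd
  have hderivFcont : ContinuousOn (fun ξ => deriv F ξ) (ball (0:ℂ) 1) := by
    have hFon : DifferentiableOn ℂ F (ball (0:ℂ) 1) := fun η hη =>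
      (hFd η hη).differentiableWithinAt
    exact ((hFon.analyticOnNhd isOpen_ball).deriv).continuousOn
  have hgdcont : ContinuousOn gd (Icc (0:ℝ) 1) := by
    apply Complex.continuous_re.comp_continuousOn
    apply ContinuousOn.mul _ continuousOn_const
    exact hderivFcont.comp (by fun_prop) hsu
  have hgcont : ContinuousOn g (Icc (0:ℝ) 1) := fun s hs =>
    ((hgderiv s hs).continuousAt).continuousWithinAt
  have hgJ : ∀ s ∈ Icc (0:ℝ) 1, g s ∈ J := fun s hs => hFRe _ (hsu s hs)
  -- change of variables
  have huIcc : uIcc (0:ℝ) 1 = Icc (0:ℝ) 1 := uIcc_of_le (by norm_num)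
  have hcv : ∫ t in (g 0)..(g 1), ω t = ∫ s in (0:ℝ)..1, gd s • ω (g s) := by
    rw [← intervalIntegral.integral_comp_smul_deriv'' (f := g) (f' := gd) (g := ω)]
    · rfl
    · rwa [huIcc]
    · intro x hx
      rw [min_eq_left (by norm_num : (0:ℝ) ≤ 1), max_eq_right (by norm_num : (0:ℝ) ≤ 1)] at hx
      exact ((hgderiv x (Ioo_subset_Icc_self hx)).hasDerivWithinAt)
    · rwa [huIcc]
    · apply (hωC2.continuousOn).mono
      rw [huIcc]
      intro y hy
      obtain ⟨s, hs, rfl⟩ := hy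
      exact hgJ s hs
  -- pointwise bound
  have hρsq : ∀ s : ℝ, s ∈ Icc (0:ℝ) 1 → 0 < 1 - s^2 * ρ^2 := by
    intro s hs
    have h1 : s^2 ≤ 1 := by nlinarith [hs.1, hs.2]
    nlinarith [sq_nonneg s, sq_nonneg ρ]
  have hpt : ∀ s ∈ Icc (0:ℝ) 1, |gd s * ω (g s)| ≤ 2 * ρ / (1 - s^2*ρ^2) := by
    intro s hs
    have hmem := hsu s hs
    have hdb := deriv_bound_pt J hJo hJc ω hωpos hωC2 hcurv F hFd hFRe _ hmem
    have hnsq : Complex.normSq ((s:ℂ)*u) = s^2 * ρ^2 := by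
      rw [Complex.normSq_mul, Complex.normSq_ofReal, hρ, ← Complex.sq_abs]
      ring
    rw [hnsq] at hdb
    have hωg : 0 < ω (g s) := hωpos _ (hgJ s hs)
    have h1 : |gd s| ≤ Complex.abs (deriv F ((s:ℂ)*u)) * ρ := by
      rw [hgd]
      calc |(deriv F ((s:ℂ) * u) * u).re| ≤ Complex.abs (deriv F ((s:ℂ) * u) * u) :=
            Complex.abs_re_le_abs _
        _ = Complex.abs (deriv F ((s:ℂ)*u)) * ρ := by rw [map_mul]
    have hden := hρsq s hs
    rw [abs_mul, _root_.abs_of_pos hωg]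
    calc |gd s| * ω (g s) ≤ (Complex.abs (deriv F ((s:ℂ)*u)) * ρ) * ω (g s) :=
          mul_le_mul_of_nonneg_right h1 (le_of_lt hωg)
      _ = ρ * (ω (g s) * Complex.abs (deriv F ((s:ℂ)*u))) := by ring
      _ ≤ 2 * ρ / (1 - s^2*ρ^2) := by
          rw [div_eq_mul_inv]
          have h2 : ω (g s) * Complex.abs (deriv F ((s:ℂ)*u)) ≤ 2 * (1 - s^2*ρ^2)⁻¹ := by
            rw [← mul_assoc] at hdb
            calc ω (g s) * Complex.abs (deriv F ((s:ℂ)*u))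
                = ω (g s) * Complex.abs (deriv F ((s:ℂ)*u)) * (1 - s^2*ρ^2) * (1 - s^2*ρ^2)⁻¹ := by
                  field_simp
              _ ≤ 2 * (1 - s^2*ρ^2)⁻¹ := by
                  apply mul_le_mul_of_nonneg_right hdb (by positivity)
          calc ρ * (ω (g s) * Complex.abs (deriv F ((s:ℂ)*u))) ≤ ρ * (2 * (1 - s^2*ρ^2)⁻¹) :=
                mul_le_mul_of_nonneg_left h2 hρ0
            _ = 2 * ρ * (1 - s^2*ρ^2)⁻¹ := by ring
  -- integrability
  have hint1 : IntervalIntegrable (fun s => gd s * ω (g s)) MeasureTheory.volume 0 1 := by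
    apply ContinuousOn.intervalIntegrable
    rw [huIcc]
    exact hgdcont.mul ((hωC2.continuousOn.comp hgcont) hgJ)
  have hcont2 : ContinuousOn (fun s : ℝ => 2 * ρ / (1 - s^2*ρ^2)) (Icc (0:ℝ) 1) := by
    apply ContinuousOn.div continuousOn_const (by fun_prop)
    intro s hs
    exact ne_of_gt (hρsq s hs)
  have hint2 : IntervalIntegrable (fun s : ℝ => 2 * ρ / (1 - s^2*ρ^2)) MeasureTheory.volume 0 1 := by
    apply ContinuousOn.intervalIntegrable
    rwa [huIcc]
  -- FTC for the hyperbolic integrand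
  have hftc : ∫ s in (0:ℝ)..1, 2 * ρ / (1 - s^2*ρ^2)
      = Real.log ((1+ρ)/(1-ρ)) := by
    have hA : ∀ s ∈ uIcc (0:ℝ) 1, HasDerivAt (fun t => Real.log (1+t*ρ) - Real.log (1-t*ρ))
        (2 * ρ / (1 - s^2*ρ^2)) s := by
      intro s hs
      rw [huIcc] at hs
      have hp1 : 0 < 1 + s*ρ := by nlinarith [hs.1, hs.2]
      have hp2 : 0 < 1 - s*ρ := by nlinarith [hs.1, hs.2]
      have d1 : HasDerivAt (fun t : ℝ => 1+t*ρ) ρ s := by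
        exact ((hasDerivAt_const s (1:ℝ)).add ((hasDerivAt_id s).mul_const ρ)).congr_deriv (by ring)
      have d2 : HasDerivAt (fun t : ℝ => 1-t*ρ) (-ρ) s := by
        exact ((hasDerivAt_const s (1:ℝ)).sub ((hasDerivAt_id s).mul_const ρ)).congr_deriv (by ring)
      have l1 := (Real.hasDerivAt_log (ne_of_gt hp1)).comp s d1
      have l2 := (Real.hasDerivAt_log (ne_of_gt hp2)).comp s d2
      have := l1.sub l2
      have heq : (1+s*ρ)⁻¹ * ρ - (1-s*ρ)⁻¹ * (-ρ) = 2 * ρ / (1 - s^2*ρ^2) := by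
        rw [div_eq_mul_inv]
        have : 1 - s^2*ρ^2 = (1+s*ρ)*(1-s*ρ) := by ring
        rw [this, mul_inv]
        field_simp
        ring
      rw [heq] at this
      exact this
    rw [intervalIntegral.integral_eq_sub_of_hasDerivAt hA hint2]
    have h10 : (1:ℝ)*ρ = ρ := one_mul ρ
    have h00 : (0:ℝ)*ρ = 0 := zero_mul ρ
    rw [h10, h00]
    rw [Real.log_div (by linarith) (by linarith)]
    simp
  -- put everything together
  rw [← hg0, ← hg1, hcv]
  have habs : |∫ s in (0:ℝ)..1, gd s • ω (g s)| ≤ ∫ s in (0:ℝ)..1, 2 * ρ / (1 - s^2*ρ^2) := by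
    calc |∫ s in (0:ℝ)..1, gd s • ω (g s)| ≤ ∫ s in (0:ℝ)..1, |gd s * ω (g s)| := by
          simpa using intervalIntegral.abs_integral_le_integral_abs (f := fun s => gd s * ω (g s)) (by norm_num : (0:ℝ) ≤ 1)
      _ ≤ ∫ s in (0:ℝ)..1, 2 * ρ / (1 - s^2*ρ^2) := by
          apply intervalIntegral.integral_mono_on (by norm_num) hint1.abs hint2
          exact hpt
  rw [hftc] at habs
  rw [hypDist, ← hρeq]
  exact habs
end

section
/- Let f be a holomorphic function on the open unit disk 𝔻 ⊆ ℂ with |Re f(z)| < 1 for all z ∈ 𝔻. Then for all z, w ∈ 𝔻, |∫_{Re f(w)}^{Re f(z)} (π/2)·(1/cos(π t/2)) dt| ≤ σ(z, w); that is, Re f is contractive with respect to the hyperbolic distance on 𝔻 and the distance on (−1, 1) induced by the weight ω(t) = (π/2)/cos(π t/2) (the hyperbolic distance on (−1,1) inherited from the strip (−1,1) × ℝ). -/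
open Real

namespace ChenAux

open Complex Metric

lemma normSq_id (a ζ : ℂ) :
    Complex.normSq (1 + (starRingEnd ℂ) a * ζ) - Complex.normSq (ζ + a)
      = (1 - Complex.normSq a) * (1 - Complex.normSq ζ) := by
  simp [Complex.normSq_apply, Complex.add_re, Complex.add_im, Complex.mul_re, Complex.mul_im]
  ring

noncomputable def moeb (a ζ : ℂ) : ℂ := (ζ + a) / (1 + (starRingEnd ℂ) a * ζ)

lemma moeb_den_ne (a ζ : ℂ) (h : ‖a‖ * ‖ζ‖ < 1) :
    1 + (starRingEnd ℂ) a * ζ ≠ 0 := by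
  intro hc
  have h1 : ‖(starRingEnd ℂ) a * ζ‖ = 1 := by
    have : (starRingEnd ℂ) a * ζ = -1 := by linear_combination hc
    rw [this]; simp
  rw [norm_mul, Complex.norm_conj] at h1
  linarith

lemma abs_moeb_lt_one {a ζ : ℂ} (ha : ‖a‖ < 1) (hζ : ‖ζ‖ < 1) :
    ‖moeb a ζ‖ < 1 := by
  have hne := moeb_den_ne a ζ (by nlinarith [norm_nonneg a, norm_nonneg ζ])
  have key := normSq_id a ζ
  have h1 : Complex.normSq ζ < 1 := by
    rw [← Complex.sq_norm]; nlinarith [norm_nonneg ζ]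
  have h2 : Complex.normSq a < 1 := by
    rw [← Complex.sq_norm]; nlinarith [norm_nonneg a]
  have hpos : 0 < Complex.normSq (1 + (starRingEnd ℂ) a * ζ) := by
    rwa [Complex.normSq_pos]
  have : Complex.normSq (ζ + a) < Complex.normSq (1 + (starRingEnd ℂ) a * ζ) := by nlinarith
  have habs : 0 < ‖1 + (starRingEnd ℂ) a * ζ‖ := by
    simpa [norm_pos_iff] using hne
  rw [moeb, norm_div, div_lt_one habs]
  have := Complex.sq_norm (ζ + a)
  have := Complex.sq_norm (1 + (starRingEnd ℂ) a * ζ)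
  nlinarith [norm_nonneg (ζ+a), norm_nonneg (1 + (starRingEnd ℂ) a * ζ)]

lemma hasDerivAt_moeb (a ζ : ℂ) (h : 1 + (starRingEnd ℂ) a * ζ ≠ 0) :
    HasDerivAt (moeb a) ((1 - Complex.normSq a) / (1 + (starRingEnd ℂ) a * ζ)^2) ζ := by
  have h1 : HasDerivAt (fun ζ : ℂ => ζ + a) 1 ζ := (hasDerivAt_id ζ).add_const a
  have h2 : HasDerivAt (fun ζ : ℂ => 1 + (starRingEnd ℂ) a * ζ) ((starRingEnd ℂ) a) ζ := by
    simpa using ((hasDerivAt_id ζ).const_mul ((starRingEnd ℂ) a)).const_add 1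
  have := h1.div h2 h
  refine this.congr_deriv ?_
  have hc : (starRingEnd ℂ) a * a = (Complex.normSq a : ℂ) := Complex.normSq_eq_conj_mul_self.symm
  rw [div_left_inj' (pow_ne_zero 2 h)]
  linear_combination -hc

lemma moeb_zero (a : ℂ) : moeb a 0 = a := by simp [moeb]

lemma schwarz_pick_deriv {g : ℂ → ℂ} (hd : DifferentiableOn ℂ g (ball 0 1))
    (hm : Set.MapsTo g (ball 0 1) (ball 0 1)) {p : ℂ} (hp : p ∈ ball 0 1) :
    ‖deriv g p‖ * (1 - ‖p‖ ^ 2) ≤ 1 - ‖g p‖ ^ 2 := by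
  have hp1 : ‖p‖ < 1 := by simpa [mem_ball, Complex.dist_eq] using hp
  have hgp1 : ‖g p‖ < 1 := by
    simpa [mem_ball, Complex.dist_eq] using hm hp
  set b := -(g p) with hb
  have hb1 : ‖b‖ < 1 := by simpa [hb] using hgp1
  set G := fun ζ => moeb b (g (moeb p ζ)) with hG
  have hmoebp : ∀ ζ ∈ ball (0:ℂ) 1, moeb p ζ ∈ ball (0:ℂ) 1 := by
    intro ζ hζ
    have : ‖ζ‖ < 1 := by simpa [mem_ball, Complex.dist_eq] using hζ
    simpa [mem_ball, Complex.dist_eq] using abs_moeb_lt_one hp1 this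
  have hGmaps : Set.MapsTo G (ball 0 1) (ball 0 1) := by
    intro ζ hζ
    have h2 := hm (hmoebp ζ hζ)
    have : ‖g (moeb p ζ)‖ < 1 := by simpa [mem_ball, Complex.dist_eq] using h2
    simpa [hG, mem_ball, Complex.dist_eq] using abs_moeb_lt_one hb1 this
  have hG0 : G 0 = 0 := by
    have h1 : 1 + (starRingEnd ℂ) b * g p ≠ 0 := by
      apply moeb_den_ne
      nlinarith [norm_nonneg b, norm_nonneg (g p)]
    simp [hG, moeb_zero, moeb, hb]
  have hdiffmoeb : ∀ a : ℂ, ‖a‖ < 1 → ∀ ζ ∈ ball (0:ℂ) 1, DifferentiableAt ℂ (moeb a) ζ := by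
    intro a ha ζ hζ
    have hζ1 : ‖ζ‖ < 1 := by simpa [mem_ball, Complex.dist_eq] using hζ
    exact (hasDerivAt_moeb a ζ (moeb_den_ne a ζ (by nlinarith [norm_nonneg a, norm_nonneg ζ]))).differentiableAt
  have hGdiff : DifferentiableOn ℂ G (ball 0 1) := by
    intro ζ hζ
    apply DifferentiableAt.differentiableWithinAt
    have d1 : DifferentiableAt ℂ (moeb p) ζ := hdiffmoeb p hp1 ζ hζ
    have d2 : DifferentiableAt ℂ g (moeb p ζ) := hd.differentiableAt (isOpen_ball.mem_nhds (hmoebp ζ hζ))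
    have d3 : DifferentiableAt ℂ (moeb b) (g (moeb p ζ)) :=
      hdiffmoeb b hb1 _ (hm (hmoebp ζ hζ))
    exact d3.comp ζ (d2.comp ζ d1)
  have hden : (1:ℂ) + (starRingEnd ℂ) b * g p ≠ 0 := by
    apply moeb_den_ne; nlinarith [norm_nonneg b, norm_nonneg (g p)]
  have D1 : HasDerivAt (moeb p) (1 - Complex.normSq p) 0 := by
    have := hasDerivAt_moeb p 0 (by simpa using one_ne_zero)
    simpa using this
  have D2 : HasDerivAt g (deriv g p) (moeb p 0) := by
    rw [moeb_zero]
    exact (hd.differentiableAt (isOpen_ball.mem_nhds hp)).hasDerivAt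
  have D3 : HasDerivAt (moeb b) ((1 - Complex.normSq b) / (1 + (starRingEnd ℂ) b * g (moeb p 0))^2) (g (moeb p 0)) := by
    apply hasDerivAt_moeb
    rw [moeb_zero]; exact hden
  have DG : HasDerivAt G ((1 - Complex.normSq b) / (1 + (starRingEnd ℂ) b * g (moeb p 0))^2 * (deriv g p * (1 - Complex.normSq p))) 0 :=
    D3.comp (h := g ∘ moeb p) 0 (D2.comp (h := moeb p) 0 D1)
  have hSch := Complex.norm_deriv_le_one_of_mapsTo_ball hGdiff (by rw [hG0]; exact hGmaps.mono_right ball_subset_closedBall) one_pos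
  rw [DG.deriv] at hSch
  have hbgp : (1:ℂ) + (starRingEnd ℂ) b * g p = 1 - (Complex.normSq (g p) : ℂ) := by
    rw [hb]
    simp [Complex.normSq_eq_conj_mul_self]
    ring
  have hsq : Complex.normSq b = Complex.normSq (g p) := by simp [hb]
  rw [moeb_zero, hbgp, hsq] at hSch
  have hnormgp : Complex.normSq (g p) = ‖g p‖ ^ 2 := (Complex.sq_norm _).symm
  have hnormp : Complex.normSq p = ‖p‖ ^ 2 := (Complex.sq_norm _).symm
  have hne : (1:ℝ) - ‖g p‖^2 > 0 := by nlinarith [norm_nonneg (g p)]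
  have hexp : ((1:ℂ) - (Complex.normSq (g p):ℂ)) / ((1 - (Complex.normSq (g p):ℂ))^2) = 1 / (1 - (Complex.normSq (g p):ℂ)) := by
    have : (1:ℂ) - (Complex.normSq (g p):ℂ) ≠ 0 := by
      intro hc
      have : (Complex.normSq (g p) : ℂ) = 1 := by linear_combination -hc
      have := Complex.ofReal_inj.mp (by exact_mod_cast this)
      rw [hnormgp] at this; nlinarith
    field_simp
  rw [hexp] at hSch
  rw [norm_mul, norm_div] at hSch
  simp only [norm_one] at hSch
  have habs1 : ‖(1:ℂ) - (Complex.normSq (g p):ℂ)‖ = 1 - ‖g p‖^2 := by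
    have : ((1:ℂ) - (Complex.normSq (g p):ℂ)) = ((1 - ‖g p‖^2 : ℝ) : ℂ) := by
      push_cast [hnormgp]; ring
    rw [this, Complex.norm_real, Real.norm_eq_abs, abs_of_pos hne]
  have habs2 : ‖deriv g p * ((1:ℂ) - (Complex.normSq p : ℂ))‖ = ‖deriv g p‖ * (1 - ‖p‖ ^2) := by
    rw [norm_mul]
    congr 1
    have : ((1:ℂ) - (Complex.normSq p:ℂ)) = ((1 - ‖p‖^2 : ℝ) : ℂ) := by
      push_cast [hnormp]; ring
    rw [this, Complex.norm_real, Real.norm_eq_abs, abs_of_pos (by nlinarith [norm_nonneg p])]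
  rw [habs1, habs2] at hSch
  calc ‖deriv g p‖ * (1 - ‖p‖ ^ 2)
      = (1 - ‖g p‖^2) * (1 / (1 - ‖g p‖^2) * (‖deriv g p‖ * (1 - ‖p‖ ^2))) := by
        field_simp
    _ ≤ (1 - ‖g p‖^2) * 1 := by
        apply mul_le_mul_of_nonneg_left hSch (le_of_lt hne)
    _ = 1 - ‖g p‖^2 := mul_one _

lemma normSq_sin' (ζ : ℂ) : Complex.normSq (Complex.sin ζ) = Real.sin ζ.re ^2 + Real.sinh ζ.im ^2 := by
  rw [Complex.sin_eq]
  simp [Complex.normSq_apply, ← Complex.ofReal_sin, ← Complex.ofReal_cos, ← Complex.ofReal_sinh, ← Complex.ofReal_cosh]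
  have := Real.cosh_sq ζ.im
  nlinarith [Real.sin_sq_add_cos_sq ζ.re]

lemma normSq_cos' (ζ : ℂ) : Complex.normSq (Complex.cos ζ) = Real.cos ζ.re ^2 + Real.sinh ζ.im ^2 := by
  rw [Complex.cos_eq]
  simp [Complex.normSq_apply, ← Complex.ofReal_sin, ← Complex.ofReal_cos, ← Complex.ofReal_sinh, ← Complex.ofReal_cosh]
  have := Real.cosh_sq ζ.im
  nlinarith [Real.sin_sq_add_cos_sq ζ.re]

lemma quarter_re (ζ : ℂ) : ((π : ℂ) * ζ / 4).re = π * ζ.re / 4 := by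
  have : (π : ℂ) * ζ / 4 = ((π/4 : ℝ) : ℂ) * ζ := by push_cast; ring
  rw [this]; simp [Complex.mul_re]; ring

lemma xfacts {r : ℝ} (hr : |r| < 1) :
    Real.cos (π * r / 4) > 0 ∧ Real.sin (π * r / 4)^2 < Real.cos (π * r / 4)^2 ∧
      Real.cos (π * r / 2) = Real.cos (π * r / 4)^2 - Real.sin (π * r / 4)^2 := by
  have hx1 : |π * r / 4| < π / 4 := by
    rw [abs_div, abs_mul, abs_of_pos Real.pi_pos]
    rw [abs_of_pos (by norm_num : (0:ℝ) < 4)]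
    have := Real.pi_pos
    rw [div_lt_div_iff₀ (by norm_num) (by norm_num)]
    nlinarith
  have hπ4 : π / 4 < π / 2 := by have := Real.pi_pos; linarith
  have hcos : Real.cos (π * r / 4) > 0 := by
    apply Real.cos_pos_of_mem_Ioo
    constructor
    · have := abs_lt.mp hx1; linarith
    · have := abs_lt.mp hx1; linarith
  have hdouble : Real.cos (π * r / 2) = Real.cos (π * r / 4)^2 - Real.sin (π * r / 4)^2 := by
    rw [show π * r / 2 = 2 * (π * r / 4) by ring, Real.cos_two_mul]
    have := Real.sin_sq_add_cos_sq (π * r / 4)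
    nlinarith
  have hcos2 : Real.cos (π * r / 2) > 0 := by
    apply Real.cos_pos_of_mem_Ioo
    have h2 : |π * r / 2| < π / 2 := by
      rw [abs_div, abs_mul, abs_of_pos Real.pi_pos, abs_of_pos (by norm_num : (0:ℝ) < 2)]
      have := Real.pi_pos
      rw [div_lt_div_iff₀ (by norm_num) (by norm_num)]
      nlinarith
    have := abs_lt.mp h2
    constructor <;> linarith
  refine ⟨hcos, by nlinarith, hdouble⟩

lemma cos_half_pos {r : ℝ} (hr : |r| < 1) : 0 < Real.cos (π * r / 2) := by
  obtain ⟨h1, h2, h3⟩ := xfacts hr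
  rw [h3]; linarith

lemma strip_deriv_bound {f : ℂ → ℂ}
    (hf : ∀ ζ ∈ ball (0:ℂ) 1, DifferentiableAt ℂ f ζ)
    (hRe : ∀ ζ ∈ ball (0:ℂ) 1, |(f ζ).re| < 1)
    {p : ℂ} (hp : p ∈ ball (0:ℂ) 1) :
    (π/2) * (1 / Real.cos (π * (f p).re / 2)) * ‖deriv f p‖
      * (1 - ‖p‖ ^ 2) ≤ 2 := by
  set h : ℂ → ℂ := fun ζ => Complex.tan ((π : ℂ) * f ζ / 4) with hh
  have key : ∀ ζ ∈ ball (0:ℂ) 1, Complex.cos ((π:ℂ) * f ζ / 4) ≠ 0 ∧ ‖h ζ‖ < 1 := by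
    intro ζ hζ
    obtain ⟨hc, hlt, _⟩ := xfacts (hRe ζ hζ)
    have hre : ((π:ℂ) * f ζ / 4).re = π * (f ζ).re / 4 := quarter_re _
    have hnc : Complex.normSq (Complex.cos ((π:ℂ) * f ζ / 4)) =
        Real.cos (π * (f ζ).re / 4)^2 + Real.sinh (((π:ℂ) * f ζ / 4).im)^2 := by
      rw [normSq_cos', hre]
    have hns : Complex.normSq (Complex.sin ((π:ℂ) * f ζ / 4)) =
        Real.sin (π * (f ζ).re / 4)^2 + Real.sinh (((π:ℂ) * f ζ / 4).im)^2 := by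
      rw [normSq_sin', hre]
    have hcpos : 0 < Complex.normSq (Complex.cos ((π:ℂ) * f ζ / 4)) := by
      rw [hnc]; nlinarith [sq_nonneg (Real.sinh (((π:ℂ) * f ζ / 4).im))]
    have hcne : Complex.cos ((π:ℂ) * f ζ / 4) ≠ 0 := by
      intro hc0; rw [hc0] at hcpos; simp at hcpos
    refine ⟨hcne, ?_⟩
    have : Complex.normSq (h ζ) < 1 := by
      rw [hh]
      simp only [Complex.tan_eq_sin_div_cos]
      rw [map_div₀]
      rw [div_lt_one hcpos, hnc, hns]
      nlinarith
    have := Complex.sq_norm (h ζ)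
    nlinarith [norm_nonneg (h ζ)]
  have hmaps : Set.MapsTo h (ball 0 1) (ball 0 1) := by
    intro ζ hζ
    simpa [mem_ball, Complex.dist_eq] using (key ζ hζ).2
  have hderivh : HasDerivAt h (1 / Complex.cos ((π:ℂ) * f p / 4) ^ 2 * ((π:ℂ)/4 * deriv f p)) p := by
    have h1 : HasDerivAt (fun ζ => (π : ℂ) * f ζ / 4) ((π:ℂ)/4 * deriv f p) p := by
      have := ((hf p hp).hasDerivAt.const_mul (π:ℂ)).div_const 4
      refine this.congr_deriv (by ring)
    exact (Complex.hasDerivAt_tan (key p hp).1).comp (h := fun ζ => (π : ℂ) * f ζ / 4) p h1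
  have hdiff : DifferentiableOn ℂ h (ball 0 1) := by
    intro ζ hζ
    apply DifferentiableAt.differentiableWithinAt
    have h1 : HasDerivAt (fun ξ => (π : ℂ) * f ξ / 4) ((π:ℂ)/4 * deriv f ζ) ζ := by
      have := ((hf ζ hζ).hasDerivAt.const_mul (π:ℂ)).div_const 4
      refine this.congr_deriv (by ring)
    exact ((Complex.hasDerivAt_tan (key ζ hζ).1).comp (h := fun ξ => (π : ℂ) * f ξ / 4) ζ h1).differentiableAt
  have hSP := schwarz_pick_deriv hdiff hmaps hp
  rw [hderivh.deriv] at hSP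
  obtain ⟨hc, hlt, hdouble⟩ := xfacts (hRe p hp)
  set x := π * (f p).re / 4
  set y := ((π:ℂ) * f p / 4).im
  have hre : ((π:ℂ) * f p / 4).re = x := quarter_re _
  set Q := Real.cos x ^2 + Real.sinh y ^2 with hQ
  have hQpos : 0 < Q := by nlinarith [sq_nonneg (Real.sinh y)]
  have hnc : Complex.normSq (Complex.cos ((π:ℂ) * f p / 4)) = Q := by rw [normSq_cos', hre]
  have hns : Complex.normSq (Complex.sin ((π:ℂ) * f p / 4)) =
      Real.sin x ^2 + Real.sinh y ^2 := by rw [normSq_sin', hre]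
  have hcne := (key p hp).1
  have habs_h : ‖h p‖ ^2 = (Real.sin x^2 + Real.sinh y^2) / Q := by
    rw [Complex.sq_norm, hh]
    simp only [Complex.tan_eq_sin_div_cos]
    rw [map_div₀, hnc, hns]
  have habs_d : ‖1 / Complex.cos ((π:ℂ) * f p / 4) ^ 2 * ((π:ℂ)/4 * deriv f p)‖
      = (1 / Q) * (π / 4 * ‖deriv f p‖) := by
    rw [norm_mul, norm_div, norm_one, norm_pow, norm_mul, norm_div]
    rw [← Complex.sq_norm] at hnc
    rw [hnc]
    simp [Complex.norm_real, Real.norm_eq_abs, abs_of_pos Real.pi_pos]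
  rw [habs_d, habs_h] at hSP
  have hrhs : 1 - (Real.sin x^2 + Real.sinh y^2)/Q = Real.cos (π * (f p).re / 2) / Q := by
    rw [hdouble]
    field_simp
    ring
  rw [hrhs] at hSP
  have hcos2 : 0 < Real.cos (π * (f p).re / 2) := by rw [hdouble]; nlinarith
  have hp2 : ‖p‖ ^ 2 < 1 := by
    have : ‖p‖ < 1 := by simpa [mem_ball, Complex.dist_eq] using hp
    nlinarith [norm_nonneg p]
  have h2 : π / 4 * ‖deriv f p‖ * (1 - ‖p‖ ^2) ≤ Real.cos (π * (f p).re / 2) := by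
    have := mul_le_mul_of_nonneg_left hSP (le_of_lt hQpos)
    calc π / 4 * ‖deriv f p‖ * (1 - ‖p‖ ^2)
        = Q * (1/Q * (π/4 * ‖deriv f p‖) * (1 - ‖p‖ ^2)) := by
          field_simp
      _ ≤ Q * (Real.cos (π * (f p).re / 2) / Q) := this
      _ = Real.cos (π * (f p).re / 2) := by field_simp
  calc (π/2) * (1 / Real.cos (π * (f p).re / 2)) * ‖deriv f p‖ * (1 - ‖p‖ ^ 2)
      = (1 / Real.cos (π * (f p).re / 2)) * (2 * (π / 4 * ‖deriv f p‖ * (1 - ‖p‖ ^2))) := by ring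
    _ ≤ (1 / Real.cos (π * (f p).re / 2)) * (2 * Real.cos (π * (f p).re / 2)) := by
        apply mul_le_mul_of_nonneg_left _ (by positivity)
        linarith
    _ = 2 := by field_simp

noncomputable def Fstrip (s : ℝ) : ℝ := Real.log (Real.tan (π * (s+1) / 4))

lemma hasDerivAt_Fstrip {s : ℝ} (hs : |s| < 1) :
    HasDerivAt Fstrip ((π/2) * (1 / Real.cos (π * s / 2))) s := by
  have hsl := abs_lt.mp hs
  set θ := π * (s+1) / 4 with hθ
  have hθpos : 0 < θ := by
    rw [hθ]; have := Real.pi_pos; nlinarith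
  have hθlt : θ < π / 2 := by
    rw [hθ]; have := Real.pi_pos; nlinarith
  have hcos : 0 < Real.cos θ := Real.cos_pos_of_mem_Ioo ⟨by linarith, hθlt⟩
  have hsin : 0 < Real.sin θ := Real.sin_pos_of_pos_of_lt_pi hθpos (by have := Real.pi_pos; linarith)
  have htan : 0 < Real.tan θ := by rw [Real.tan_eq_sin_div_cos]; positivity
  have h1 : HasDerivAt (fun s : ℝ => π * (s+1) / 4) (π/4) s := by
    have := (((hasDerivAt_id s).add_const 1).const_mul π).div_const 4
    simpa using this
  have h2 : HasDerivAt Real.tan (1 / Real.cos θ ^ 2) θ := Real.hasDerivAt_tan (ne_of_gt hcos)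
  have h3 : HasDerivAt (fun s : ℝ => Real.tan (π * (s+1)/4)) (1 / Real.cos θ ^2 * (π/4)) s := h2.comp (h := fun s : ℝ => π * (s+1) / 4) s h1
  have h4 := (Real.hasDerivAt_log (ne_of_gt htan)).comp (h := fun s : ℝ => Real.tan (π * (s+1)/4)) s h3
  have hval : (Real.tan θ)⁻¹ * (1 / Real.cos θ ^2 * (π/4)) = (π/2) * (1 / Real.cos (π * s / 2)) := by
    have hsin2 : Real.cos (π * s / 2) = 2 * Real.sin θ * Real.cos θ := by
      have : π * (s+1)/2 = π * s / 2 + π/2 := by ring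
      have h5 : Real.sin (π * (s+1)/2) = Real.cos (π * s/2) := by
        rw [this, Real.sin_add_pi_div_two]
      rw [← h5, show π * (s+1)/2 = 2 * θ by rw [hθ]; ring, Real.sin_two_mul]
    rw [hsin2, Real.tan_eq_sin_div_cos]
    field_simp
    ring
  rw [← hval]
  exact h4

lemma geo {w c : ℂ} (hw : ‖w‖ < 1) (hc : ‖c‖ < 1) {t : ℝ}
    (ht0 : 0 ≤ t) (ht1 : t ≤ 1) :
    ‖moeb w ((t:ℂ)*c)‖ < 1 ∧
    HasDerivAt (fun s : ℝ => moeb w ((s:ℂ)*c))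
      (((1:ℂ) - (Complex.normSq w:ℂ))/(1 + (starRingEnd ℂ) w * ((t:ℂ)*c))^2 * c) t ∧
    2 * ‖((1:ℂ) - (Complex.normSq w:ℂ))/(1 + (starRingEnd ℂ) w * ((t:ℂ)*c))^2 * c‖
      ≤ (1 - ‖moeb w ((t:ℂ)*c)‖^2) * (2 * ‖c‖ / (1 - t^2 * ‖c‖^2)) := by
  have habs_tc : ‖(t:ℂ)*c‖ = t * ‖c‖ := by
    rw [norm_mul, Complex.norm_real, Real.norm_eq_abs, _root_.abs_of_nonneg ht0]
  have htc : ‖(t:ℂ)*c‖ < 1 := by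
    rw [habs_tc]
    nlinarith [norm_nonneg c, norm_nonneg w]
  have hden : (1:ℂ) + (starRingEnd ℂ) w * ((t:ℂ)*c) ≠ 0 := by
    apply moeb_den_ne
    nlinarith [norm_nonneg w, norm_nonneg ((t:ℂ)*c)]
  have part1 : ‖moeb w ((t:ℂ)*c)‖ < 1 := abs_moeb_lt_one hw htc
  refine ⟨part1, ?_, ?_⟩
  · -- derivative
    have hinner : HasDerivAt (fun ξ : ℂ => ξ * c) c (t:ℂ) := by
      simpa using (hasDerivAt_id (t:ℂ)).mul_const c
    have hC : HasDerivAt (fun ξ : ℂ => moeb w (ξ*c))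
        (((1:ℂ) - (Complex.normSq w:ℂ))/(1 + (starRingEnd ℂ) w * ((t:ℂ)*c))^2 * c) (t:ℂ) :=
      (hasDerivAt_moeb w ((t:ℂ)*c) hden).comp (h := fun ξ : ℂ => ξ * c) (t:ℂ) hinner
    exact hC.comp_ofReal
  · -- metric comparison
    set den := (1:ℂ) + (starRingEnd ℂ) w * ((t:ℂ)*c) with hden_def
    have hQpos : 0 < Complex.normSq den := Complex.normSq_pos.2 hden
    have hnw : Complex.normSq w < 1 := by
      rw [← Complex.sq_norm]; nlinarith [norm_nonneg w]
    have hr2 : t^2 * ‖c‖^2 < 1 := by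
      have ht2 : t^2 ≤ 1 := by nlinarith
      have hc2 : ‖c‖^2 < 1 := by nlinarith [norm_nonneg c]
      nlinarith [sq_nonneg (‖c‖), sq_nonneg t]
    have E2 : 1 - ‖moeb w ((t:ℂ)*c)‖^2
        = (1 - Complex.normSq w) * (1 - t^2 * ‖c‖^2) / Complex.normSq den := by
      have h1 : ‖moeb w ((t:ℂ)*c)‖^2
          = Complex.normSq ((t:ℂ)*c + w) / Complex.normSq den := by
        rw [Complex.sq_norm, moeb, map_div₀]
      have hid := normSq_id w ((t:ℂ)*c)
      have htc2 : Complex.normSq ((t:ℂ)*c) = t^2 * ‖c‖^2 := by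
        rw [map_mul, Complex.normSq_ofReal, ← Complex.sq_norm]
        ring
      rw [h1]
      rw [htc2] at hid
      field_simp
      linarith [hid]
    have E1 : ‖((1:ℂ) - (Complex.normSq w:ℂ))/den^2 * c‖
        = (1 - Complex.normSq w) * ‖c‖ / Complex.normSq den := by
      rw [norm_mul, norm_div, norm_pow]
      have ha : ‖(1:ℂ) - (Complex.normSq w:ℂ)‖ = 1 - Complex.normSq w := by
        have : ((1:ℂ) - (Complex.normSq w:ℂ)) = ((1 - Complex.normSq w : ℝ) : ℂ) := by push_cast; ring
        rw [this, Complex.norm_real, Real.norm_eq_abs, abs_of_pos (by linarith)]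
      rw [ha, ← Complex.sq_norm den]
      ring
    rw [E1, E2]
    apply le_of_eq
    have h1t : (0:ℝ) < 1 - t^2 * ‖c‖^2 := by linarith
    generalize t^2 * ‖c‖^2 = T at h1t ⊢
    have hne : (1:ℝ) - T ≠ 0 := h1t.ne'
    field_simp


lemma chain_bound {f : ℂ → ℂ}
    (hf : ∀ ζ ∈ ball (0:ℂ) 1, DifferentiableAt ℂ f ζ)
    (hRe : ∀ ζ ∈ ball (0:ℂ) 1, |(f ζ).re| < 1)
    {w c : ℂ} (hw : ‖w‖ < 1) (hc : ‖c‖ < 1)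
    {t : ℝ} (ht0 : 0 ≤ t) (ht1 : t ≤ 1) :
    ∃ d : ℝ, HasDerivAt (fun s : ℝ => Fstrip ((f (moeb w ((s:ℂ)*c))).re)) d t ∧
      |d| ≤ 2 * ‖c‖ / (1 - t^2 * ‖c‖^2) := by
  obtain ⟨hp1, hder, hcomp⟩ := geo hw hc ht0 ht1
  have hpball : moeb w ((t:ℂ)*c) ∈ ball (0:ℂ) 1 := by
    simp only [mem_ball, Complex.dist_eq, sub_zero]
    exact hp1
  have hfd : DifferentiableAt ℂ f (moeb w ((t:ℂ)*c)) := hf _ hpball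
  have hden : (1:ℂ) + (starRingEnd ℂ) w * ((t:ℂ)*c) ≠ 0 := by
    apply moeb_den_ne
    have : ‖(t:ℂ)*c‖ = t * ‖c‖ := by
      rw [norm_mul, Complex.norm_real, Real.norm_eq_abs, _root_.abs_of_nonneg ht0]
    nlinarith [norm_nonneg w, norm_nonneg ((t:ℂ)*c), norm_nonneg c]
  -- derivative of f ∘ γ
  have hfγ : HasDerivAt (fun s : ℝ => f (moeb w ((s:ℂ)*c)))
      (deriv f (moeb w ((t:ℂ)*c)) *
        (((1:ℂ) - (Complex.normSq w:ℂ))/(1 + (starRingEnd ℂ) w * ((t:ℂ)*c))^2 * c)) t := by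
    have hinner : HasDerivAt (fun ξ : ℂ => ξ * c) c (t:ℂ) := by
      simpa using (hasDerivAt_id (t:ℂ)).mul_const c
    have hC : HasDerivAt (fun ξ : ℂ => moeb w (ξ*c))
        (((1:ℂ) - (Complex.normSq w:ℂ))/(1 + (starRingEnd ℂ) w * ((t:ℂ)*c))^2 * c) (t:ℂ) :=
      (hasDerivAt_moeb w ((t:ℂ)*c) hden).comp (h := fun ξ : ℂ => ξ * c) (t:ℂ) hinner
    exact (hfd.hasDerivAt.comp (h := fun ξ : ℂ => moeb w (ξ*c)) (t:ℂ) hC).comp_ofReal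
  have hreγ : HasDerivAt (fun s : ℝ => ((f (moeb w ((s:ℂ)*c))).re))
      ((deriv f (moeb w ((t:ℂ)*c)) *
        (((1:ℂ) - (Complex.normSq w:ℂ))/(1 + (starRingEnd ℂ) w * ((t:ℂ)*c))^2 * c)).re) t := by
    have := Complex.reCLM.hasFDerivAt.comp_hasDerivAt t hfγ
    simp at this; exact this
  have habsfp : |(f (moeb w ((t:ℂ)*c))).re| < 1 := hRe _ hpball
  have hF := hasDerivAt_Fstrip habsfp
  refine ⟨(π/2) * (1 / Real.cos (π * (f (moeb w ((t:ℂ)*c))).re / 2)) *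
      (deriv f (moeb w ((t:ℂ)*c)) *
        (((1:ℂ) - (Complex.normSq w:ℂ))/(1 + (starRingEnd ℂ) w * ((t:ℂ)*c))^2 * c)).re, ?_, ?_⟩
  · exact hF.comp (h := fun s : ℝ => (f (moeb w ((s:ℂ)*c))).re) t hreγ
  · set DT := ((1:ℂ) - (Complex.normSq w:ℂ))/(1 + (starRingEnd ℂ) w * ((t:ℂ)*c))^2 * c with hDT
    have hω : 0 < Real.cos (π * (f (moeb w ((t:ℂ)*c))).re / 2) := cos_half_pos habsfp
    have hωpos : 0 ≤ (π/2) * (1 / Real.cos (π * (f (moeb w ((t:ℂ)*c))).re / 2)) := by positivity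
    have hstrip := strip_deriv_bound hf hRe hpball
    have h1p : 0 < 1 - ‖moeb w ((t:ℂ)*c)‖ ^ 2 := by
      nlinarith [norm_nonneg (moeb w ((t:ℂ)*c))]
    have hr2 : t^2 * ‖c‖^2 < 1 := by
      have ht2 : t^2 ≤ 1 := by nlinarith
      nlinarith [norm_nonneg c, sq_nonneg (‖c‖), sq_nonneg t]
    have hBnn : 0 ≤ 2 * ‖c‖ / (1 - t^2 * ‖c‖^2) := by
      have : (0:ℝ) < 1 - t^2 * ‖c‖^2 := by linarith
      positivity
    have hUle : |(π/2) * (1 / Real.cos (π * (f (moeb w ((t:ℂ)*c))).re / 2)) *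
        (deriv f (moeb w ((t:ℂ)*c)) * DT).re|
        ≤ (π/2) * (1 / Real.cos (π * (f (moeb w ((t:ℂ)*c))).re / 2)) *
          (‖deriv f (moeb w ((t:ℂ)*c))‖ * ‖DT‖) := by
      rw [abs_mul, _root_.abs_of_nonneg hωpos]
      apply mul_le_mul_of_nonneg_left _ hωpos
      calc |(deriv f (moeb w ((t:ℂ)*c)) * DT).re|
          ≤ ‖deriv f (moeb w ((t:ℂ)*c)) * DT‖ := Complex.abs_re_le_norm _
        _ = ‖deriv f (moeb w ((t:ℂ)*c))‖ * ‖DT‖ := norm_mul _ _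
    refine hUle.trans ?_
    have hAD := mul_le_mul_of_nonneg_right hstrip (norm_nonneg DT)
    -- hAD : ω * |f'| * (1-|p|²) * |DT| ≤ 2 * |DT|
    -- hcomp : 2 * |DT| ≤ (1-|p|²) * B
    nlinarith [norm_nonneg (deriv f (moeb w ((t:ℂ)*c))), norm_nonneg DT,
      mul_nonneg hωpos (norm_nonneg (deriv f (moeb w ((t:ℂ)*c))))]

end ChenAux

open ChenAux Metric

set_option maxHeartbeats 2000000 in
/-- If f is holomorphic on the unit disk with |Re f| < 1, then
`|∫_{Re f(w)}^{Re f(z)} (π/2)/cos(πt/2) dt| ≤ σ(z,w)` (Chen's theorem). -/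
theorem re_holomorphic_strip_contraction (f : ℂ → ℂ)
    (hf : ∀ z ∈ Metric.ball (0 : ℂ) 1, DifferentiableAt ℂ f z)
    (hRe : ∀ z ∈ Metric.ball (0 : ℂ) 1, |(f z).re| < 1)
    (z w : ℂ) (hz : z ∈ Metric.ball (0 : ℂ) 1) (hw : w ∈ Metric.ball (0 : ℂ) 1) :
    |∫ t in (f w).re..(f z).re, (π / 2) * (1 / Real.cos (π * t / 2))| ≤
      hypDist z w := by
  have hz1 : ‖z‖ < 1 := by simpa [mem_ball, Complex.dist_eq] using hz
  have hw1 : ‖w‖ < 1 := by simpa [mem_ball, Complex.dist_eq] using hw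
  have ha1 : |(f w).re| < 1 := hRe w hw
  have hb1 : |(f z).re| < 1 := hRe z hz
  have hdenz : (1:ℂ) - (starRingEnd ℂ) w * z ≠ 0 := by
    intro h0
    have h1 : ‖(starRingEnd ℂ) w * z‖ = 1 := by
      have : (starRingEnd ℂ) w * z = 1 := by linear_combination -h0
      rw [this]; simp
    rw [norm_mul, Complex.norm_conj] at h1
    nlinarith [norm_nonneg w, norm_nonneg z]
  set c := (z - w) / (1 - (starRingEnd ℂ) w * z) with hc_def
  set r := ‖c‖ with hr_def
  have hdenzpos : 0 < ‖1 - (starRingEnd ℂ) w * z‖ := by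
    simpa [norm_pos_iff] using hdenz
  have hr1 : r < 1 := by
    rw [hr_def, hc_def, norm_div, div_lt_one hdenzpos]
    have hid := normSq_id (-w) z
    simp only [map_neg, neg_mul, Complex.normSq_neg] at hid
    have h1 : Complex.normSq (1 + -((starRingEnd ℂ) w * z)) = Complex.normSq (1 - (starRingEnd ℂ) w * z) := by
      ring_nf
    have h2 : Complex.normSq (z + -w) = Complex.normSq (z - w) := by ring_nf
    rw [h1, h2] at hid
    have hnw : Complex.normSq w < 1 := by
      rw [← Complex.sq_norm]; nlinarith [norm_nonneg w]
    have hnz : Complex.normSq z < 1 := by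
      rw [← Complex.sq_norm]; nlinarith [norm_nonneg z]
    have : Complex.normSq (z - w) < Complex.normSq (1 - (starRingEnd ℂ) w * z) := by nlinarith
    have e1 := Complex.sq_norm (z - w)
    have e2 := Complex.sq_norm (1 - (starRingEnd ℂ) w * z)
    nlinarith [norm_nonneg (z - w), norm_nonneg (1 - (starRingEnd ℂ) w * z)]
  have hr0 : 0 ≤ r := norm_nonneg c
  -- the composed function
  set u : ℝ → ℝ := fun t => Fstrip ((f (moeb w ((t:ℂ) * c))).re) with hu_def
  have hu0 : u 0 = Fstrip (f w).re := by
    simp [hu_def, moeb]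
  have hu1 : u 1 = Fstrip (f z).re := by
    have hγ1 : moeb w (((1:ℝ):ℂ) * c) = z := by
      have h1 : (1:ℂ) + (starRingEnd ℂ) w * c ≠ 0 := by
        apply moeb_den_ne
        nlinarith [norm_nonneg w, norm_nonneg c]
      have hcdef : c * (1 - (starRingEnd ℂ) w * z) = z - w := by
        rw [hc_def]; exact div_mul_cancel₀ _ hdenz
      rw [show (((1:ℝ):ℂ) * c) = c by push_cast; ring, moeb, div_eq_iff h1]
      linear_combination hcdef
    rw [hu_def]
    simp only
    rw [hγ1]
  -- comparison function
  set B : ℝ → ℝ := fun t => 2 * r / (1 - t^2 * r^2) with hB_def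
  set φ : ℝ → ℝ := fun t => Real.log (1 + t*r) - Real.log (1 - t*r) with hφ_def
  have hφder : ∀ t ∈ Set.Icc (0:ℝ) 1, HasDerivAt φ (B t) t := by
    intro t ht
    obtain ⟨ht0, ht1⟩ := ht
    have h1 : (0:ℝ) < 1 + t*r := by nlinarith
    have h2 : (0:ℝ) < 1 - t*r := by nlinarith
    have d1 : HasDerivAt (fun t : ℝ => 1 + t*r) r t := by
      simpa using ((hasDerivAt_id t).mul_const r).const_add 1
    have d2 : HasDerivAt (fun t : ℝ => 1 - t*r) (-r) t := by
      simpa using ((hasDerivAt_id t).mul_const r).const_sub 1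
    have l1 := (Real.hasDerivAt_log (ne_of_gt h1)).comp t d1
    have l2 := (Real.hasDerivAt_log (ne_of_gt h2)).comp t d2
    have := l1.sub l2
    refine this.congr_deriv ?_
    rw [hB_def]
    have h3 : 1 - t^2*r^2 = (1+t*r)*(1-t*r) := by ring
    simp only [h3]
    field_simp
    ring
  have hφ0 : φ 0 = 0 := by simp [hφ_def]
  -- monotonicity argument
  have habs_diff : |u 1 - u 0| ≤ φ 1 := by
    have mono : ∀ (s : ℝ), s = 1 ∨ s = -1 →
        φ 0 - s * (u 0 - u 0) ≤ φ 1 - s * (u 1 - u 0) := by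
      intro s hs
      have key : MonotoneOn (fun t => φ t - s * (u t - u 0)) (Set.Icc (0:ℝ) 1) := by
        apply monotoneOn_of_deriv_nonneg (convex_Icc 0 1)
        · intro t ht
          obtain ⟨ht0, ht1⟩ := ht
          obtain ⟨d, hd, _⟩ := chain_bound hf hRe hw1 hr1 ht0 ht1
          have : HasDerivAt (fun t => φ t - s * (u t - u 0)) (B t - s * d) t :=
            (hφder t ⟨ht0, ht1⟩).sub (((hd.sub_const (u 0))).const_mul s)
          exact this.continuousAt.continuousWithinAt
        · rw [interior_Icc]
          intro t ht
          obtain ⟨ht0, ht1⟩ := Set.mem_Icc_of_Ioo ht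
          obtain ⟨d, hd, _⟩ := chain_bound hf hRe hw1 hr1 ht0 ht1
          exact ((hφder t ⟨ht0, ht1⟩).sub
            (((hd.sub_const (u 0))).const_mul s)).differentiableAt.differentiableWithinAt
        · rw [interior_Icc]
          intro t ht
          obtain ⟨ht0, ht1⟩ := Set.mem_Icc_of_Ioo ht
          obtain ⟨d, hd, hdb⟩ := chain_bound hf hRe hw1 hr1 ht0 ht1
          have hD : HasDerivAt (fun t => φ t - s * (u t - u 0)) (B t - s * d) t :=
            (hφder t ⟨ht0, ht1⟩).sub (((hd.sub_const (u 0))).const_mul s)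
          rw [hD.deriv]
          have hBt : |d| ≤ B t := hdb
          rcases hs with h | h <;> subst h
          · nlinarith [le_abs_self d]
          · nlinarith [neg_abs_le d]
      exact key (Set.left_mem_Icc.mpr zero_le_one) (Set.right_mem_Icc.mpr zero_le_one) zero_le_one
    have m1 := mono 1 (Or.inl rfl)
    have m2 := mono (-1) (Or.inr rfl)
    rw [hφ0] at m1 m2
    rw [abs_le]
    constructor <;> nlinarith
  -- FTC for the left side
  have hFTC : ∫ t in (f w).re..(f z).re, (π / 2) * (1 / Real.cos (π * t / 2))
      = Fstrip (f z).re - Fstrip (f w).re := by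
    apply intervalIntegral.integral_eq_sub_of_hasDerivAt
    · intro x hx
      apply hasDerivAt_Fstrip
      rw [Set.uIcc_eq_union] at hx
      rw [abs_lt]
      rcases hx with hx | hx <;> obtain ⟨h1, h2⟩ := hx <;>
        constructor <;> nlinarith [abs_lt.mp ha1, abs_lt.mp hb1]
    · apply ContinuousOn.intervalIntegrable
      apply ContinuousOn.mul continuousOn_const
      apply ContinuousOn.div continuousOn_const
      · exact (Real.continuous_cos.comp ((continuous_const.mul continuous_id).div_const 2)).continuousOn
      · intro x hx
        have hxabs : |x| < 1 := by
          rw [Set.uIcc_eq_union] at hx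
          rw [abs_lt]
          rcases hx with hx | hx <;> obtain ⟨h1, h2⟩ := hx <;>
            constructor <;> nlinarith [abs_lt.mp ha1, abs_lt.mp hb1]
        exact ne_of_gt (cos_half_pos hxabs)
  -- final computation
  have hρ : pseudoHypDist z w = r := by
    rw [pseudoHypDist, hr_def, hc_def, norm_div]
    congr 1
    have hconj : (starRingEnd ℂ) (1 - (starRingEnd ℂ) z * w) = 1 - (starRingEnd ℂ) w * z := by
      simp [map_sub, map_mul]
      ring
    rw [← hconj, Complex.norm_conj]
  have hhyp : hypDist z w = Real.log (1 + r) - Real.log (1 - r) := by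
    rw [hypDist, hρ, Real.log_div (by positivity) (by intro h; nlinarith)]
  have hφ1 : φ 1 = Real.log (1 + r) - Real.log (1 - r) := by
    rw [hφ_def]; simp
  rw [hFTC, hhyp, ← hφ1, ← hu0, ← hu1]
  exact habs_diff
end

section
/- Let f be a holomorphic function on the open unit disk 𝔻 ⊆ ℂ with Re f(z) > 0 for all z ∈ 𝔻. Then for all z, w ∈ 𝔻, |log(Re f(z)) − log(Re f(w))| ≤ σ(z, w); that is, Re f is contractive with respect to the hyperbolic distance on 𝔻 and the distance on (0, ∞) induced by the weight ω(t) = 1/t (the hyperbolic distance on (0,∞) inherited from the half-plane (0,∞) × ℝ). -/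
open Complex Metric

noncomputable def myMobius (a z : ℂ) : ℂ := (a - z) / (1 - (starRingEnd ℂ) a * z)

noncomputable def myCay (x : ℂ) : ℂ := (x - 1) / (x + 1)

lemma myNormSqIdentity (a z : ℂ) :
    normSq (1 - (starRingEnd ℂ) a * z) - normSq (a - z)
      = (1 - normSq a) * (1 - normSq z) := by
  simp only [normSq_apply, sub_re, sub_im, one_re, one_im, mul_re, mul_im, conj_re, conj_im]
  ring

lemma myDenomNe {a z : ℂ} (ha : ‖a‖ < 1) (hz : ‖z‖ < 1) :
    (1 : ℂ) - (starRingEnd ℂ) a * z ≠ 0 := by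
  intro h
  rw [sub_eq_zero] at h
  have h2 : ‖(starRingEnd ℂ) a * z‖ = 1 := by rw [← h]; simp
  rw [norm_mul, Complex.norm_conj] at h2
  nlinarith [norm_nonneg a, norm_nonneg z]

lemma myAbsSqLt {a z : ℂ} (ha : ‖a‖ < 1) (hz : ‖z‖ < 1) :
    ‖a - z‖ < ‖1 - (starRingEnd ℂ) a * z‖ := by
  have key := myNormSqIdentity a z
  have h1 : normSq a < 1 := by rw [normSq_eq_norm_sq]; nlinarith [norm_nonneg a]
  have h2 : normSq z < 1 := by rw [normSq_eq_norm_sq]; nlinarith [norm_nonneg z]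
  have hsq : ‖a - z‖ ^ 2 < ‖1 - (starRingEnd ℂ) a * z‖ ^ 2 := by
    rw [Complex.sq_norm, Complex.sq_norm]; nlinarith
  exact lt_of_pow_lt_pow_left₀ 2 (norm_nonneg _) hsq

lemma myAbsMobiusLt {a z : ℂ} (ha : ‖a‖ < 1) (hz : ‖z‖ < 1) :
    ‖myMobius a z‖ < 1 := by
  rw [myMobius, norm_div, div_lt_one (norm_pos_iff.mpr (myDenomNe ha hz))]
  exact myAbsSqLt ha hz

lemma myMobiusInvolution {a z : ℂ} (ha : ‖a‖ < 1) (hz : ‖z‖ < 1) :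
    myMobius a (myMobius a z) = z := by
  have h1 := myDenomNe ha hz
  have h2 : (1 : ℂ) - (starRingEnd ℂ) a * a ≠ 0 := myDenomNe ha ha
  rw [myMobius, myMobius]
  have hnum : a - (a - z) / (1 - (starRingEnd ℂ) a * z)
      = z * (1 - (starRingEnd ℂ) a * a) / (1 - (starRingEnd ℂ) a * z) := by
    rw [eq_div_iff h1, sub_mul, div_mul_cancel₀ _ h1]; ring
  have hden : 1 - (starRingEnd ℂ) a * ((a - z) / (1 - (starRingEnd ℂ) a * z))
      = (1 - (starRingEnd ℂ) a * a) / (1 - (starRingEnd ℂ) a * z) := by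
    field_simp; ring
  rw [hnum, hden, div_div_div_cancel_right₀, mul_div_assoc, div_self h2, mul_one]
  exact h1

lemma myMobiusDiff {a : ℂ} (ha : ‖a‖ < 1) :
    DifferentiableOn ℂ (myMobius a) (ball 0 1) := by
  intro ζ hζ
  rw [mem_ball_zero_iff] at hζ
  apply DifferentiableAt.differentiableWithinAt
  exact ((differentiableAt_const a).sub differentiableAt_id).div
    ((differentiableAt_const 1).sub ((differentiableAt_const _).mul differentiableAt_id))
    (myDenomNe ha hζ)

lemma myCayNormSq (x : ℂ) : normSq (x + 1) - normSq (x - 1) = 4 * x.re := by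
  simp only [normSq_apply, add_re, add_im, sub_re, sub_im, one_re, one_im]
  ring

lemma myAddOneNe {x : ℂ} (hx : 0 < x.re) : x + 1 ≠ 0 := by
  intro h
  have := congrArg Complex.re h
  simp only [add_re, one_re, zero_re] at this
  linarith

lemma myAbsCayLt {x : ℂ} (hx : 0 < x.re) : ‖myCay x‖ < 1 := by
  rw [myCay, norm_div, div_lt_one (norm_pos_iff.mpr (myAddOneNe hx))]
  have key := myCayNormSq x
  have hsq : ‖x - 1‖ ^ 2 < ‖x + 1‖ ^ 2 := by
    rw [Complex.sq_norm, Complex.sq_norm]; nlinarith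
  exact lt_of_pow_lt_pow_left₀ 2 (norm_nonneg _) hsq

lemma myAbsMobiusCay {a b : ℂ} (ha : 0 < a.re) (hb : 0 < b.re) :
    ‖myMobius (myCay b) (myCay a)‖
      = ‖a - b‖ / ‖a + (starRingEnd ℂ) b‖ := by
  have ha1 : a + 1 ≠ 0 := myAddOneNe ha
  have hb1 : b + 1 ≠ 0 := myAddOneNe hb
  have hb1' : (starRingEnd ℂ) b + 1 ≠ 0 := by
    intro h; apply hb1
    have := congrArg (starRingEnd ℂ) h
    simpa using this
  have hab : a + (starRingEnd ℂ) b ≠ 0 := by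
    intro h
    have := congrArg Complex.re h
    simp only [add_re, conj_re, zero_re] at this
    linarith
  have hnum : myCay b - myCay a = 2 * (b - a) / ((b + 1) * (a + 1)) := by
    rw [myCay, myCay]; field_simp; ring
  have hden : 1 - (starRingEnd ℂ) (myCay b) * myCay a
      = 2 * (a + (starRingEnd ℂ) b) / (((starRingEnd ℂ) b + 1) * (a + 1)) := by
    rw [myCay, myCay, map_div₀, map_sub, map_add, map_one]
    field_simp; ring
  have hc : ‖(starRingEnd ℂ) b + 1‖ = ‖b + 1‖ := by
    rw [show (starRingEnd ℂ) b + 1 = (starRingEnd ℂ) (b + 1) by simp, Complex.norm_conj]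
  rw [myMobius, norm_div, hnum, hden, norm_div, norm_div, norm_mul, norm_mul, norm_mul, norm_mul,
    hc, show ‖(2:ℂ)‖ = 2 by norm_num]
  have hba : ‖b - a‖ = ‖a - b‖ := norm_sub_rev b a
  rw [hba]
  have h1 : (0:ℝ) < ‖b + 1‖ := norm_pos_iff.mpr hb1
  have h2 : (0:ℝ) < ‖a + 1‖ := norm_pos_iff.mpr ha1
  have h3 : (0:ℝ) < ‖a + (starRingEnd ℂ) b‖ := norm_pos_iff.mpr hab
  field_simp

lemma myRatioMono {s r : ℝ} (h0 : 0 ≤ s) (hsr : s ≤ r) (hr : r < 1) :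
    (1 + s) / (1 - s) ≤ (1 + r) / (1 - r) := by
  rw [div_le_div_iff₀ (by linarith) (by linarith)]
  nlinarith

/-- Harnack-type inequality in the half-plane. -/
lemma myHarnack {a b : ℂ} (ha : 0 < a.re) (hb : 0 < b.re) :
    a.re / b.re ≤ (1 + ‖a - b‖ / ‖a + (starRingEnd ℂ) b‖)
      / (1 - ‖a - b‖ / ‖a + (starRingEnd ℂ) b‖) := by
  set A := ‖a + (starRingEnd ℂ) b‖ with hA
  set B := ‖a - b‖ with hB
  have hsq : A ^ 2 - B ^ 2 = 4 * a.re * b.re := by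
    rw [hA, hB, Complex.sq_norm, Complex.sq_norm]
    simp only [normSq_apply, add_re, add_im, sub_re, sub_im, conj_re, conj_im]
    ring
  have hAre : a.re + b.re ≤ A := by
    have : (a + (starRingEnd ℂ) b).re ≤ ‖a + (starRingEnd ℂ) b‖ := Complex.re_le_norm _
    simpa only [add_re, conj_re] using this
  have hBre : a.re - b.re ≤ B := by
    have h1 : |(a - b).re| ≤ ‖a - b‖ := Complex.abs_re_le_norm _
    have := abs_le.1 h1
    simp only [sub_re] at this
    linarith [this.2]
  have hApos : 0 < A := by linarith
  have hBnn : 0 ≤ B := norm_nonneg _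
  have hABpos : 0 < A - B := by nlinarith
  have hA0 : A ≠ 0 := ne_of_gt hApos
  have ht : (1 + B / A) / (1 - B / A) = (A + B) / (A - B) := by
    have e1 : 1 + B / A = (A + B) / A := by field_simp
    have e2 : 1 - B / A = (A - B) / A := by field_simp
    rw [e1, e2, div_div_div_cancel_right₀]
    exact hA0
  rw [ht]
  rw [div_le_div_iff₀ hb hABpos]
  nlinarith [sq_nonneg (A + B - 2 * a.re)]

theorem myCompRw {α β γ : Type*} (f : β → γ) (g : α → β) (x : α) : (f ∘ g) x = f (g x) := rfl

/-- If f is holomorphic on the unit disk with Re f > 0, then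
`|log(Re f(z)) − log(Re f(w))| ≤ σ(z,w)` (Marković's theorem). -/
theorem re_holomorphic_halfplane_contraction (f : ℂ → ℂ)
    (hf : ∀ z ∈ Metric.ball (0 : ℂ) 1, DifferentiableAt ℂ f z)
    (hRe : ∀ z ∈ Metric.ball (0 : ℂ) 1, 0 < (f z).re)
    (z w : ℂ) (hz : z ∈ Metric.ball (0 : ℂ) 1) (hw : w ∈ Metric.ball (0 : ℂ) 1) :
    |Real.log (f z).re - Real.log (f w).re| ≤ hypDist z w := by
  have hz' : ‖z‖ < 1 := by rwa [mem_ball_zero_iff] at hz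
  have hw' : ‖w‖ < 1 := by rwa [mem_ball_zero_iff] at hw
  -- g maps the disk to the disk
  set g : ℂ → ℂ := fun ζ => myCay (f ζ) with hg
  have hgmem : ∀ ζ ∈ ball (0 : ℂ) 1, ‖g ζ‖ < 1 := fun ζ hζ =>
    myAbsCayLt (hRe ζ hζ)
  have hgdiff : DifferentiableOn ℂ g (ball 0 1) := by
    intro ζ hζ
    apply DifferentiableAt.differentiableWithinAt
    have hfd := hf ζ hζ
    have h1 : f ζ + 1 ≠ 0 := myAddOneNe (hRe ζ hζ)
    exact ((hfd.sub (differentiableAt_const 1)).div (hfd.add (differentiableAt_const 1)) h1)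
  have hgw : ‖g w‖ < 1 := hgmem w hw
  -- the composed map h
  set h : ℂ → ℂ := myMobius (g w) ∘ g ∘ myMobius w with hh
  have hmapsM : Set.MapsTo (myMobius w) (ball (0:ℂ) 1) (ball (0:ℂ) 1) := by
    intro ζ hζ
    rw [mem_ball_zero_iff] at hζ ⊢
    exact myAbsMobiusLt hw' hζ
  have hmapsG : Set.MapsTo g (ball (0:ℂ) 1) (ball (0:ℂ) 1) := by
    intro ζ hζ
    rw [mem_ball_zero_iff]
    exact hgmem ζ hζ
  have hmapsM2 : Set.MapsTo (myMobius (g w)) (ball (0:ℂ) 1) (ball (0:ℂ) 1) := by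
    intro ζ hζ
    rw [mem_ball_zero_iff] at hζ ⊢
    exact myAbsMobiusLt hgw hζ
  have hdiff : DifferentiableOn ℂ h (ball 0 1) :=
    ((myMobiusDiff hgw).comp (hgdiff.comp (myMobiusDiff hw') hmapsM) (hmapsG.comp hmapsM))
  have hmaps : Set.MapsTo h (ball (0:ℂ) 1) (ball (0:ℂ) 1) :=
    hmapsM2.comp (hmapsG.comp hmapsM)
  have h0 : h 0 = 0 := by
    have e1 : myMobius w 0 = w := by rw [myMobius]; simp
    have e2 : myMobius (g w) (g w) = 0 := by rw [myMobius]; simp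
    simp only [hh, Function.comp_apply, e1, e2]
  have hzball : ‖myMobius w z‖ < 1 := myAbsMobiusLt hw' hz'
  have schwarz := Complex.norm_le_norm_of_mapsTo_ball hdiff (hmaps.mono_right Metric.ball_subset_closedBall) h0 hzball
  have hinv : g (myMobius w (myMobius w z)) = g z := by rw [myMobiusInvolution hw' hz']
  have hH : h (myMobius w z) = myMobius (g w) (g z) := by
    simp only [hh, Function.comp_apply, hinv]
  rw [hH] at schwarz
  -- identify abs (myMobius w z) with pseudoHypDist z w
  have hABS : ‖myMobius w z‖ = pseudoHypDist z w := by
    rw [myMobius, pseudoHypDist, norm_div]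
    congr 1
    · exact norm_sub_rev w z
    · rw [show (1:ℂ) - (starRingEnd ℂ) w * z = (starRingEnd ℂ) (1 - (starRingEnd ℂ) z * w) by
        simp [mul_comm], Complex.norm_conj]
  rw [hABS] at schwarz hzball
  -- identify abs (myMobius (g w) (g z)) with the half-plane pseudo-distance
  set a := f z with haa
  set b := f w with hbb
  have hpa : 0 < a.re := hRe z hz
  have hpb : 0 < b.re := hRe w hw
  have hmc : ‖myMobius (g w) (g z)‖
      = ‖a - b‖ / ‖a + (starRingEnd ℂ) b‖ :=
    myAbsMobiusCay hpa hpb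
  rw [hmc] at schwarz
  set ρ := pseudoHypDist z w with hρ
  set t := ‖a - b‖ / ‖a + (starRingEnd ℂ) b‖ with hts
  have htnn : 0 ≤ t := by
    apply div_nonneg (norm_nonneg _) (norm_nonneg _)
  have hρnn : 0 ≤ ρ := le_trans htnn schwarz
  -- Harnack both ways
  have hHar1 : a.re / b.re ≤ (1 + t) / (1 - t) := myHarnack hpa hpb
  have hHar2 : b.re / a.re ≤ (1 + t) / (1 - t) := by
    have := myHarnack hpb hpa
    have e1 : ‖b - a‖ = ‖a - b‖ := norm_sub_rev b a
    have e2 : ‖b + (starRingEnd ℂ) a‖ = ‖a + (starRingEnd ℂ) b‖ := by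
      rw [show b + (starRingEnd ℂ) a = (starRingEnd ℂ) (a + (starRingEnd ℂ) b) by simp [add_comm],
        Complex.norm_conj]
    rwa [e1, e2, ← hts] at this
  have hmono : (1 + t) / (1 - t) ≤ (1 + ρ) / (1 - ρ) := myRatioMono htnn schwarz hzball
  have hpos1 : (0:ℝ) < a.re / b.re := div_pos hpa hpb
  have hpos2 : (0:ℝ) < b.re / a.re := div_pos hpb hpa
  have hfinal1 : Real.log (a.re / b.re) ≤ Real.log ((1 + ρ) / (1 - ρ)) :=
    Real.log_le_log hpos1 (le_trans hHar1 hmono)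
  have hfinal2 : Real.log (b.re / a.re) ≤ Real.log ((1 + ρ) / (1 - ρ)) :=
    Real.log_le_log hpos2 (le_trans hHar2 hmono)
  rw [Real.log_div (ne_of_gt hpa) (ne_of_gt hpb)] at hfinal1
  rw [Real.log_div (ne_of_gt hpb) (ne_of_gt hpa)] at hfinal2
  rw [hypDist, ← hρ]
  rw [abs_le]
  constructor
  · linarith
  · linarith
end

section
/- Let f be a holomorphic function on the open unit disk 𝔻 ⊆ ℂ with |Re f(z)| < 1 for all z ∈ 𝔻. Then for all z, w ∈ 𝔻, |log((1 + Re f(z))/(1 − Re f(z))) − log((1 + Re f(w))/(1 − Re f(w)))| ≤ (4/π)·σ(z, w); that is, the real part of f is (4/π)-Lipschitz from the hyperbolic distance on 𝔻 to the hyperbolic distance on the interval (−1,1) induced by the weight 2/(1 − t²). -/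
open Real

section
open Metric Set
local notation "conj'" => starRingEnd ℂ

lemma cos_le_one_sub_sq {x : ℝ} (hx : |x| ≤ 1) : Real.cos (π/2*x) ≤ 1 - x^2 := by
  wlog h0 : 0 ≤ x generalizing x
  · have := this (x := -x) (by simpa using hx) (by linarith [le_of_not_ge h0])
    simpa [mul_comm] using this
  have h1 : x ≤ 1 := le_trans (le_abs_self x) hx
  have hsin : x * (Real.sqrt 2 / 2) ≤ Real.sin (π/4*x) := by
    have hc := strictConcaveOn_sin_Icc.concaveOn.2
      (show (0:ℝ) ∈ Set.Icc (0:ℝ) π from Set.mem_Icc.2 ⟨le_rfl, Real.pi_pos.le⟩)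
      (show π/4 ∈ Set.Icc (0:ℝ) π from Set.mem_Icc.2 ⟨by positivity, by linarith [Real.pi_pos]⟩)
      (show (0:ℝ) ≤ 1 - x by linarith) h0 (by ring)
    simpa [smul_eq_mul, Real.sin_pi_div_four, mul_comm] using hc
  have hsq : x^2 / 2 ≤ Real.sin (π/4*x)^2 := by
    have h2 : (0:ℝ) ≤ x * (Real.sqrt 2 / 2) := by positivity
    have := mul_self_le_mul_self h2 hsin
    have hs2 : Real.sqrt 2 ^ 2 = 2 := Real.sq_sqrt (by norm_num)
    nlinarith [this]
  have : Real.cos (π/2*x) = 1 - 2 * Real.sin (π/4*x)^2 := by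
    have : π/2*x = 2*(π/4*x) := by ring
    rw [this, Real.cos_two_mul']
    nlinarith [Real.sin_sq_add_cos_sq (π/4*x)]
  rw [this]; linarith

lemma mem_ball_iff_normSq {x : ℂ} : x ∈ Metric.ball (0:ℂ) 1 ↔ Complex.normSq x < 1 := by
  have h1 : ‖x‖^2 = Complex.normSq x := by rw [Complex.sq_norm]
  rw [mem_ball_zero_iff]
  constructor <;> intro h <;> nlinarith [norm_nonneg x]

lemma normSq_identity (u v : ℂ) :
    Complex.normSq (1 + conj' u * v) - Complex.normSq (v + u)
      = (1 - Complex.normSq u) * (1 - Complex.normSq v) := by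
  simp only [Complex.normSq_apply, Complex.add_re, Complex.add_im, Complex.mul_re,
    Complex.mul_im, Complex.one_re, Complex.one_im, Complex.conj_re, Complex.conj_im]
  ring

lemma normSq_add_sub_one (v : ℂ) :
    Complex.normSq (v+1) - Complex.normSq (v-1) = 4 * v.re := by
  simp only [Complex.normSq_apply, Complex.add_re, Complex.add_im, Complex.sub_re,
    Complex.sub_im, Complex.one_re, Complex.one_im]
  ring

lemma one_add_ne_zero' {u v : ℂ} (hu : Complex.normSq u < 1) (hv : Complex.normSq v < 1) :
    1 + conj' u * v ≠ 0 := by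
  intro h
  have h2 : conj' u * v = -1 := by linear_combination h
  have h3 : Complex.normSq (conj' u * v) = 1 := by rw [h2]; simp
  rw [Complex.normSq_mul, Complex.normSq_conj] at h3
  nlinarith [Complex.normSq_nonneg u, Complex.normSq_nonneg v]

lemma mobius_mem_ball {u ζ : ℂ} (hu : u ∈ Metric.ball (0:ℂ) 1) (hζ : ζ ∈ Metric.ball (0:ℂ) 1) :
    (ζ + u)/(1 + conj' u * ζ) ∈ Metric.ball (0:ℂ) 1 := by
  rw [mem_ball_iff_normSq] at *
  have hden : (1 + conj' u * ζ) ≠ 0 := one_add_ne_zero' hu hζ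
  rw [Complex.normSq_div, div_lt_one (Complex.normSq_pos.2 hden)]
  nlinarith [normSq_identity u ζ]

lemma mobius_hasDerivAt {u ζ : ℂ} (h : 1 + conj' u * ζ ≠ 0) :
    HasDerivAt (fun y => (y + u)/(1 + conj' u * y))
      ((1 - conj' u * u) / (1 + conj' u * ζ)^2) ζ := by
  have H := HasDerivAt.div ((hasDerivAt_id ζ).add_const u)
    (((hasDerivAt_id ζ).const_mul (conj' u)).const_add 1) h
  convert H using 1
  · rfl
  · rfl
  · rfl
  · simp only [id]; ring

lemma mobius_differentiableAt {u ζ : ℂ} (h : 1 + conj' u * ζ ≠ 0) :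
    DifferentiableAt ℂ (fun y => (y + u)/(1 + conj' u * y)) ζ :=
  (mobius_hasDerivAt h).differentiableAt

lemma aux_alg {x d N y : ℂ} (hx : x ≠ 0) (hd : d ≠ 0) :
    x/x^2 * (N/d^2 * (y/1^2)) = N*y/(x*d^2) := by
  field_simp

set_option maxHeartbeats 1600000 in
lemma key_deriv_bound {F : ℂ → ℂ} (hF : DifferentiableOn ℂ F (Metric.ball 0 1))
    (hRe : ∀ ζ ∈ Metric.ball (0:ℂ) 1, |(F ζ).re| < 1) {z₀ : ℂ} (hz₀ : z₀ ∈ Metric.ball (0:ℂ) 1) :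
    ‖deriv F z₀‖ * (1 - Complex.normSq z₀) ≤ 4/π * Real.cos (π/2 * (F z₀).re) := by
  have hπ := Real.pi_pos
  set k : ℂ := ((π/2 : ℝ) : ℂ) * Complex.I with hk
  set E : ℂ → ℂ := fun ζ => Complex.exp (k * F ζ) with hEdef
  have hkim : ∀ x : ℂ, (k * x).im = π/2 * x.re := by
    intro x
    simp [hk, Complex.mul_im, Complex.mul_re]
  have hEre : ∀ ζ ∈ Metric.ball (0:ℂ) 1, 0 < (E ζ).re := by
    intro ζ hζ
    show 0 < (Complex.exp (k * F ζ)).re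
    rw [Complex.exp_re]
    refine mul_pos (Real.exp_pos _) (Real.cos_pos_of_mem_Ioo ?_)
    rw [hkim]
    obtain ⟨h1, h2⟩ := abs_lt.1 (hRe ζ hζ)
    constructor
    · nlinarith
    · nlinarith
  have hden : ∀ ζ ∈ Metric.ball (0:ℂ) 1, E ζ + 1 ≠ 0 := by
    intro ζ hζ h
    have h1 := hEre ζ hζ
    have h2 : E ζ = -1 := by linear_combination h
    rw [h2] at h1
    norm_num at h1
  set g : ℂ → ℂ := fun ζ => (E ζ - 1)/(E ζ + 1) with hgdef
  have hgball : ∀ ζ ∈ Metric.ball (0:ℂ) 1, g ζ ∈ Metric.ball (0:ℂ) 1 := by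
    intro ζ hζ
    show (E ζ - 1)/(E ζ + 1) ∈ Metric.ball (0:ℂ) 1
    rw [mem_ball_iff_normSq, Complex.normSq_div,
      div_lt_one (Complex.normSq_pos.2 (hden ζ hζ))]
    nlinarith [normSq_add_sub_one (E ζ), hEre ζ hζ]
  have hEdiff : ∀ ζ ∈ Metric.ball (0:ℂ) 1, DifferentiableAt ℂ E ζ := fun ζ hζ =>
    ((hF.differentiableAt (isOpen_ball.mem_nhds hζ)).const_mul k).cexp
  have hgdiff : ∀ ζ ∈ Metric.ball (0:ℂ) 1, DifferentiableAt ℂ g ζ := fun ζ hζ =>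
    ((hEdiff ζ hζ).sub_const 1).div ((hEdiff ζ hζ).add_const 1) (hden ζ hζ)
  have hz₀n : Complex.normSq z₀ < 1 := mem_ball_iff_normSq.1 hz₀
  set a : ℂ := g z₀ with ha
  have haball : a ∈ Metric.ball (0:ℂ) 1 := hgball z₀ hz₀
  have hna : Complex.normSq a < 1 := mem_ball_iff_normSq.1 haball
  have hnega : Complex.normSq (-a) < 1 := by rwa [Complex.normSq_neg]
  set φ : ℂ → ℂ := fun ζ => (ζ + z₀)/(1 + conj' z₀ * ζ) with hφdef
  set ψ : ℂ → ℂ := fun ζ => (ζ + (-a))/(1 + conj' (-a) * ζ) with hψdef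
  set h : ℂ → ℂ := fun ζ => ψ (g (φ ζ)) with hhdef
  have hφball : ∀ ζ ∈ Metric.ball (0:ℂ) 1, φ ζ ∈ Metric.ball (0:ℂ) 1 := fun ζ hζ =>
    mobius_mem_ball hz₀ hζ
  have hψball : ∀ ζ ∈ Metric.ball (0:ℂ) 1, ψ ζ ∈ Metric.ball (0:ℂ) 1 := fun ζ hζ =>
    mobius_mem_ball (mem_ball_iff_normSq.2 hnega) hζ
  have hmaps : Set.MapsTo h (Metric.ball (0:ℂ) 1) (Metric.ball (0:ℂ) 1) := fun ζ hζ =>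
    hψball _ (hgball _ (hφball ζ hζ))
  have hφ0 : φ 0 = z₀ := by rw [hφdef]; simp
  have hψa : ψ a = 0 := by rw [hψdef]; simp
  have hh0 : h 0 = 0 := by rw [hhdef]; simp only; rw [hφ0, ← ha, hψa]
  have hdOn : DifferentiableOn ℂ h (Metric.ball (0:ℂ) 1) := by
    intro ζ hζ
    apply DifferentiableAt.differentiableWithinAt
    have d1 : DifferentiableAt ℂ φ ζ :=
      mobius_differentiableAt (one_add_ne_zero' hz₀n (mem_ball_iff_normSq.1 hζ))
    have d2 : DifferentiableAt ℂ g (φ ζ) := hgdiff _ (hφball ζ hζ)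
    have d3 : DifferentiableAt ℂ ψ (g (φ ζ)) :=
      mobius_differentiableAt (one_add_ne_zero' hnega
        (mem_ball_iff_normSq.1 (hgball _ (hφball ζ hζ))))
    exact (d3.comp ζ (d2.comp ζ d1))
  have hSch : ‖deriv h 0‖ ≤ 1 := by
    have hmaps' : Set.MapsTo h (Metric.ball (0:ℂ) 1) (Metric.ball (h 0) 1) := by
      rw [hh0]; exact hmaps
    have := Complex.norm_deriv_le_div_of_mapsTo_ball hdOn (hmaps'.mono_right Metric.ball_subset_closedBall) one_pos
    simpa using this
  -- derivative computation
  set D : ℂ := deriv F z₀ with hD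
  set e : ℂ := Complex.exp (k * F z₀) with he
  have hEz₀ : E z₀ = e := rfl
  have hdenz : e + 1 ≠ 0 := hden z₀ hz₀
  have hErez : 0 < e.re := hEre z₀ hz₀
  have hDd : HasDerivAt F D z₀ := (hF.differentiableAt (isOpen_ball.mem_nhds hz₀)).hasDerivAt
  have hEd : HasDerivAt E (e * (k * D)) z₀ := (hDd.const_mul k).cexp
  have hgd : HasDerivAt g ((e * (k * D) * (e + 1) - (e - 1) * (e * (k * D))) / (e + 1)^2) z₀ :=
    (hEd.sub_const 1).div (hEd.add_const 1) (hden z₀ hz₀)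
  have hφd : HasDerivAt φ ((1 - conj' z₀ * z₀) / (1 + conj' z₀ * 0)^2) 0 :=
    mobius_hasDerivAt (by simp)
  have hψd : HasDerivAt ψ ((1 - conj' (-a) * (-a)) / (1 + conj' (-a) * a)^2) a :=
    mobius_hasDerivAt (one_add_ne_zero' hnega hna)
  have hgd' : HasDerivAt g
      ((e * (k * D) * (e + 1) - (e - 1) * (e * (k * D))) / (e + 1)^2) (φ 0) := by
    rw [hφ0]; exact hgd
  have hgφd : HasDerivAt (fun ζ => g (φ ζ))
      ((e * (k * D) * (e + 1) - (e - 1) * (e * (k * D))) / (e + 1)^2 *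
        ((1 - conj' z₀ * z₀) / (1 + conj' z₀ * 0)^2)) 0 := HasDerivAt.comp 0 hgd' hφd
  have hgφ0 : g (φ 0) = a := by rw [hφ0, ha]
  have hψd' : HasDerivAt ψ ((1 - conj' (-a) * (-a)) / (1 + conj' (-a) * a)^2) (g (φ 0)) := by
    rw [hgφ0]; exact hψd
  have hhd : HasDerivAt h
      ((1 - conj' (-a) * (-a)) / (1 + conj' (-a) * a)^2 *
        ((e * (k * D) * (e + 1) - (e - 1) * (e * (k * D))) / (e + 1)^2 *
          ((1 - conj' z₀ * z₀) / (1 + conj' z₀ * 0)^2))) 0 := by have := HasDerivAt.comp 0 hψd' hgφd; exact this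
  have hderiv_h : deriv h 0 = (1 - conj' (-a) * (-a)) / (1 + conj' (-a) * a)^2 *
        ((e * (k * D) * (e + 1) - (e - 1) * (e * (k * D))) / (e + 1)^2 *
          ((1 - conj' z₀ * z₀) / (1 + conj' z₀ * 0)^2)) := hhd.deriv
  set na : ℝ := Complex.normSq a with hnadef
  set nz : ℝ := Complex.normSq z₀ with hnzdef
  have hnas : na * Complex.normSq (e + 1) = Complex.normSq (e - 1) := by
    have haeq : a = (e - 1)/(e + 1) := rfl
    rw [hnadef, haeq, Complex.normSq_div,
      div_mul_cancel₀ _ (ne_of_gt (Complex.normSq_pos.2 hdenz))]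
  have hkey : (1 - na) * Complex.normSq (e + 1) = 4 * e.re := by
    nlinarith [normSq_add_sub_one e, hnas]
  have h1a : (1 : ℂ) - conj' a * a = ((1 - na : ℝ) : ℂ) := by
    push_cast
    rw [mul_comm, Complex.mul_conj, hnadef]
  have h1z : (1 : ℂ) - conj' z₀ * z₀ = ((1 - nz : ℝ) : ℂ) := by
    push_cast
    rw [mul_comm, Complex.mul_conj, hnzdef]
  have h1a' : ((1 - na : ℝ) : ℂ) ≠ 0 := by
    simp only [ne_eq, Complex.ofReal_eq_zero]
    linarith
  have hrw1 : (1 : ℂ) - conj' (-a) * (-a) = ((1 - na : ℝ) : ℂ) := by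
    rw [map_neg, neg_mul_neg, h1a]
  have hrw2 : (1 : ℂ) + conj' (-a) * a = ((1 - na : ℝ) : ℂ) := by
    rw [map_neg, neg_mul, ← sub_eq_add_neg, h1a]
  have hrw3 : (1:ℂ) + conj' z₀ * 0 = 1 := by rw [mul_zero, add_zero]
  clear_value a e na nz
  have htotal : deriv h 0 = 2 * k * D * e * ((1 - nz : ℝ) : ℂ) /
      (((1 - na : ℝ) : ℂ) * (e + 1)^2) := by
    rw [hderiv_h, hrw1, hrw2, hrw3, h1z]
    rw [show e * (k * D) * (e + 1) - (e - 1) * (e * (k * D)) = 2 * k * D * e by ring]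
    exact aux_alg h1a' hdenz
  have hkn : ‖k‖ = π/2 := by
    rw [hk]
    simp [Complex.norm_real, _root_.abs_of_pos hπ]
  have hen : ‖e‖ = Real.exp ((k * F z₀).re) := by
    rw [he, Complex.norm_exp]
  have hEn : e.re = Real.exp ((k * F z₀).re) * Real.cos (π/2 * (F z₀).re) := by
    rw [he, Complex.exp_re, hkim]
  have hsq : ‖e + 1‖ ^ 2 = Complex.normSq (e + 1) := by
    rw [Complex.sq_norm]
  have hnorm : ‖deriv h 0‖ =
      π * ‖D‖ * ‖e‖ * (1 - nz) / ((1 - na) * Complex.normSq (e + 1)) := by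
    rw [htotal]
    simp only [norm_div, norm_mul, norm_pow]
    rw [hkn, Complex.norm_real, Complex.norm_real, Real.norm_eq_abs, Real.norm_eq_abs,
      _root_.abs_of_pos (by linarith : (0:ℝ) < 1 - nz),
      _root_.abs_of_pos (by linarith : (0:ℝ) < 1 - na), hsq,
      (by norm_num : ‖(2:ℂ)‖ = (2:ℝ))]
    ring
  have hcpos : 0 < Real.cos (π/2 * (F z₀).re) := by
    apply Real.cos_pos_of_mem_Ioo
    obtain ⟨h1, h2⟩ := abs_lt.1 (hRe z₀ hz₀)
    constructor
    · nlinarith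
    · nlinarith
  have hexp : (0:ℝ) < Real.exp ((k * F z₀).re) := Real.exp_pos _
  have hspos : 0 < Complex.normSq (e + 1) := Complex.normSq_pos.2 hdenz
  rw [hnorm, div_le_one (by nlinarith : (0:ℝ) < (1 - na) * Complex.normSq (e + 1))] at hSch
  rw [hkey, hEn, hen] at hSch
  rw [div_mul_eq_mul_div, le_div_iff₀ hπ]
  nlinarith [norm_nonneg D, hexp, hcpos, hz₀n]
set_option maxHeartbeats 1000000 in
lemma real_segment_bound {F : ℂ → ℂ} (hF : DifferentiableOn ℂ F (Metric.ball 0 1))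
    (hRe : ∀ ζ ∈ Metric.ball (0:ℂ) 1, |(F ζ).re| < 1) {r : ℝ} (h0 : 0 ≤ r) (h1 : r < 1) :
    |Real.log ((1 + (F r).re)/(1 - (F r).re)) - Real.log ((1 + (F 0).re)/(1 - (F 0).re))|
      ≤ 4/π * Real.log ((1+r)/(1-r)) := by
  have hπ := Real.pi_pos
  set A : ℝ → ℝ := fun t => Real.log (1 + (F t).re) - Real.log (1 - (F t).re) with hA
  set B : ℝ → ℝ := fun t => 4/π * (Real.log (1+t) - Real.log (1-t)) with hB
  have hball : ∀ t : ℝ, t ∈ Set.Ioo (-1:ℝ) 1 → ((t:ℂ)) ∈ Metric.ball (0:ℂ) 1 := by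
    intro t ht
    rw [mem_ball_zero_iff, Complex.norm_real, Real.norm_eq_abs, abs_lt]
    exact ⟨ht.1, ht.2⟩
  -- derivative facts at each point of Ioo (-1) 1
  have hDA : ∀ t ∈ Set.Ioo (-1:ℝ) 1,
      HasDerivAt A ((deriv F t).re/(1 + (F t).re) - (-((deriv F t).re))/(1 - (F t).re)) t := by
    intro t ht
    have htb := hball t ht
    obtain ⟨hl, hr'⟩ := abs_lt.1 (hRe _ htb)
    have hu : HasDerivAt (fun s : ℝ => (F s).re) ((deriv F (t:ℂ)).re) t :=
      ((hF.differentiableAt (Metric.isOpen_ball.mem_nhds htb)).hasDerivAt).real_of_complex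
    have h1' : HasDerivAt (fun s : ℝ => Real.log (1 + (F s).re))
        ((deriv F (t:ℂ)).re/(1 + (F t).re)) t :=
      (hu.const_add 1).log (ne_of_gt (by linarith : (0:ℝ) < 1 + (F (t:ℂ)).re))
    have h2' : HasDerivAt (fun s : ℝ => Real.log (1 - (F s).re))
        ((-((deriv F (t:ℂ)).re))/(1 - (F t).re)) t :=
      (hu.const_sub 1).log (ne_of_gt (by linarith : (0:ℝ) < 1 - (F (t:ℂ)).re))
    exact h1'.sub h2'
  have hDB : ∀ t ∈ Set.Ioo (-1:ℝ) 1,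
      HasDerivAt B (4/π * (1/(1+t) - (-1)/(1-t))) t := by
    intro t ht
    have h1' : HasDerivAt (fun s : ℝ => Real.log (1+s)) (1/(1+t)) t :=
      ((hasDerivAt_id t).const_add 1).log (ne_of_gt (by linarith [ht.1] : (0:ℝ) < 1 + t))
    have h2' : HasDerivAt (fun s : ℝ => Real.log (1-s)) ((-1)/(1-t)) t :=
      ((hasDerivAt_id t).const_sub 1).log (ne_of_gt (by linarith [ht.2] : (0:ℝ) < 1 - t))
    exact (h1'.sub h2').const_mul (4/π)
  have hbound : ∀ t ∈ Set.Ioo (-1:ℝ) 1,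
      |(deriv F t).re/(1 + (F t).re) - (-((deriv F t).re))/(1 - (F t).re)|
        ≤ 4/π * (1/(1+t) - (-1)/(1-t)) := by
    intro t ht
    have htb := hball t ht
    obtain ⟨hl, hr'⟩ := abs_lt.1 (hRe _ htb)
    have hkd := key_deriv_bound hF hRe htb
    have hns : Complex.normSq ((t:ℂ)) = t * t := Complex.normSq_ofReal t
    have hcos : Real.cos (π/2 * (F (t:ℂ)).re) ≤ 1 - ((F (t:ℂ)).re)^2 := by
      have := cos_le_one_sub_sq (x := (F (t:ℂ)).re) (le_of_lt (hRe _ htb))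
      linarith [this]
    have hre : |(deriv F (t:ℂ)).re| ≤ ‖deriv F (t:ℂ)‖ := by
      exact Complex.abs_re_le_norm _
    set u := (F (t:ℂ)).re
    set d := (deriv F (t:ℂ)).re
    have hustep : ‖deriv F (t:ℂ)‖ * (1 - t*t) ≤ 4/π * (1 - u^2) := by
      rw [hns] at hkd
      calc ‖deriv F (t:ℂ)‖ * (1 - t*t) ≤ 4/π * Real.cos (π/2 * u) := hkd
        _ ≤ 4/π * (1 - u^2) := by
            apply mul_le_mul_of_nonneg_left hcos (by positivity)
    -- combine
    have ht1 : (0:ℝ) < 1 + t := by linarith [ht.1]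
    have ht2 : (0:ℝ) < 1 - t := by linarith [ht.2]
    have hu1 : (0:ℝ) < 1 + u := by linarith
    have hu2 : (0:ℝ) < 1 - u := by linarith
    have heq : d/(1+u) - (-d)/(1-u) = 2*d/((1+u)*(1-u)) := by
      field_simp
      ring
    have heq2 : 4/π * (1/(1+t) - (-1)/(1-t)) = 4/π * (2/((1+t)*(1-t))) := by
      rw [show 1/(1+t) - (-1)/(1-t) = 2/((1+t)*(1-t)) by field_simp; ring]
    rw [heq, heq2, abs_div, abs_of_pos (by nlinarith : (0:ℝ) < (1+u)*(1-u)),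
      div_le_iff₀ (by nlinarith : (0:ℝ) < (1+u)*(1-u))]
    have habs : |2*d| ≤ 2 * ‖deriv F (t:ℂ)‖ := by
      rw [abs_mul]
      simp only [Nat.abs_ofNat]
      exact mul_le_mul_of_nonneg_left hre (by norm_num)
    have htt : (0:ℝ) < (1+t)*(1-t) := by nlinarith
    have hfin : 2 * ‖deriv F (t:ℂ)‖ ≤ 4/π * (2/((1+t)*(1-t))) * ((1+u)*(1-u)) := by
      rw [show 4/π * (2/((1+t)*(1-t))) * ((1+u)*(1-u))
            = (4/π * 2 * ((1+u)*(1-u)))/((1+t)*(1-t)) by ring]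
      rw [le_div_iff₀ htt]
      nlinarith [hustep]
    exact le_trans habs hfin
  -- monotonicity argument on [0, r]
  have hIcc : Set.Icc (0:ℝ) r ⊆ Set.Ioo (-1:ℝ) 1 := fun t ht =>
    ⟨by linarith [ht.1], lt_of_le_of_lt ht.2 h1⟩
  have hint : interior (Set.Icc (0:ℝ) r) ⊆ Set.Ioo (-1:ℝ) 1 :=
    fun t ht => hIcc (interior_subset ht)
  have hmono1 : MonotoneOn (fun t => B t - A t) (Set.Icc 0 r) := by
    apply monotoneOn_of_deriv_nonneg (convex_Icc 0 r)
    · intro t ht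
      exact (((hDB t (hIcc ht)).sub (hDA t (hIcc ht))).differentiableAt.continuousAt).continuousWithinAt
    · intro t ht
      exact ((hDB t (hint ht)).sub (hDA t (hint ht))).differentiableAt.differentiableWithinAt
    · intro t ht
      rw [show (fun t => B t - A t) = B - A from rfl, ((hDB t (hint ht)).sub (hDA t (hint ht))).deriv]
      have hb := hbound t (hint ht)
      linarith [le_of_abs_le hb]
  have hmono2 : MonotoneOn (fun t => B t + A t) (Set.Icc 0 r) := by
    apply monotoneOn_of_deriv_nonneg (convex_Icc 0 r)
    · intro t ht
      exact (((hDB t (hIcc ht)).add (hDA t (hIcc ht))).differentiableAt.continuousAt).continuousWithinAt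
    · intro t ht
      exact ((hDB t (hint ht)).add (hDA t (hint ht))).differentiableAt.differentiableWithinAt
    · intro t ht
      rw [show (fun t => B t + A t) = B + A from rfl, ((hDB t (hint ht)).add (hDA t (hint ht))).deriv]
      have hb := hbound t (hint ht)
      linarith [neg_abs_le ((deriv F t).re/(1 + (F t).re) - (-((deriv F t).re))/(1 - (F t).re)),
        le_of_abs_le hb, neg_le_of_abs_le hb]
  have hmem0 : (0:ℝ) ∈ Set.Icc (0:ℝ) r := ⟨le_refl 0, h0⟩
  have hmemr : r ∈ Set.Icc (0:ℝ) r := ⟨h0, le_refl r⟩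
  have e1 := hmono1 hmem0 hmemr h0
  have e2 := hmono2 hmem0 hmemr h0
  simp only at e1 e2
  have hB0 : B 0 = 0 := by
    rw [hB]
    norm_num
  obtain ⟨hl0, hr0'⟩ := abs_lt.1 (hRe _ (hball 0 ⟨by norm_num, by norm_num⟩))
  obtain ⟨hlr, hrr⟩ := abs_lt.1 (hRe _ (hball r ⟨by linarith, h1⟩))
  have hq1 : Real.log ((1 + (F r).re)/(1 - (F r).re)) = A r := by
    rw [hA]
    exact Real.log_div (by linarith) (by linarith)
  have hq2 : Real.log ((1 + (F ((0:ℝ):ℂ)).re)/(1 - (F ((0:ℝ):ℂ)).re)) = A 0 := by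
    rw [hA]
    exact Real.log_div (by linarith) (by linarith)
  have hq3 : 4/π * Real.log ((1+r)/(1-r)) = B r := by
    rw [hB, Real.log_div (by linarith) (by linarith)]
  rw [show ((0:ℂ)) = ((0:ℝ):ℂ) by norm_num, hq1, hq2, hq3]
  rw [abs_sub_le_iff]
  constructor
  · linarith
  · linarith


/-- Kalaj–Vuorinen: If f is holomorphic on the unit disk with |Re f| < 1,
then `|log((1+Re f(z))/(1−Re f(z))) − log((1+Re f(w))/(1−Re f(w)))| ≤ (4/π)·σ(z,w)`. -/
theorem re_holomorphic_kalaj_vuorinen (f : ℂ → ℂ)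
    (hf : ∀ z ∈ Metric.ball (0 : ℂ) 1, DifferentiableAt ℂ f z)
    (hRe : ∀ z ∈ Metric.ball (0 : ℂ) 1, |(f z).re| < 1)
    (z w : ℂ) (hz : z ∈ Metric.ball (0 : ℂ) 1) (hw : w ∈ Metric.ball (0 : ℂ) 1) :
    |Real.log ((1 + (f z).re) / (1 - (f z).re)) -
        Real.log ((1 + (f w).re) / (1 - (f w).re))| ≤ (4 / π) * hypDist z w := by
  have hπ := Real.pi_pos
  have hzn : Complex.normSq z < 1 := mem_ball_iff_normSq.1 hz
  have hwn : Complex.normSq w < 1 := mem_ball_iff_normSq.1 hw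
  by_cases hzw : z = w
  · subst hzw
    simp [hypDist, pseudoHypDist]
  · have hwden : (1 : ℂ) - conj' w * z ≠ 0 := by
      have h := one_add_ne_zero' (v := z) (u := -w) (by rwa [Complex.normSq_neg]) hzn
      rwa [map_neg, neg_mul, ← sub_eq_add_neg] at h
    set c : ℂ := (w - z)/(1 - conj' w * z) with hc
    have hc0 : c ≠ 0 := div_ne_zero (sub_ne_zero.2 (Ne.symm hzw)) hwden
    set r : ℝ := ‖c‖ with hr
    have hr0 : 0 < r := norm_pos_iff.mpr hc0
    have hcn : Complex.normSq c < 1 := by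
      rw [hc, Complex.normSq_div, div_lt_one (Complex.normSq_pos.2 hwden)]
      have hid := normSq_identity (-w) z
      rw [map_neg, neg_mul, ← sub_eq_add_neg] at hid
      have hsw : Complex.normSq (z + -w) = Complex.normSq (w - z) := by
        rw [show z + -w = -(w - z) by ring, Complex.normSq_neg]
      rw [hsw] at hid
      rw [Complex.normSq_neg] at hid
      nlinarith [hid]
    have hrlt : r < 1 := by
      have hsq : r^2 = Complex.normSq c := by rw [hr, Complex.sq_norm]
      nlinarith [norm_nonneg c]
    set uu : ℂ := c / ((r:ℝ) : ℂ) with huu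
    have hrne : ((r:ℝ):ℂ) ≠ 0 := by
      simp only [ne_eq, Complex.ofReal_eq_zero]
      exact ne_of_gt hr0
    have huun : ‖uu‖ = 1 := by
      rw [huu, norm_div, Complex.norm_real, Real.norm_eq_abs, _root_.abs_of_pos hr0, ← hr,
        div_self (ne_of_gt hr0)]
    set T : ℂ → ℂ := fun ζ => ((-(uu*ζ)) + w)/(1 + conj' w * (-(uu*ζ))) with hT
    have hη : ∀ ζ ∈ Metric.ball (0:ℂ) 1, -(uu*ζ) ∈ Metric.ball (0:ℂ) 1 := by
      intro ζ hζ
      rw [mem_ball_zero_iff] at *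
      calc ‖-(uu*ζ)‖ = ‖uu‖ * ‖ζ‖ := by
            rw [norm_neg, norm_mul]
        _ < 1 := by rw [huun, one_mul]; exact hζ
    have hTball : ∀ ζ ∈ Metric.ball (0:ℂ) 1, T ζ ∈ Metric.ball (0:ℂ) 1 := fun ζ hζ =>
      mobius_mem_ball hw (hη ζ hζ)
    have hTdiff : ∀ ζ ∈ Metric.ball (0:ℂ) 1, DifferentiableAt ℂ T ζ := by
      intro ζ hζ
      have hd := mobius_differentiableAt (u := w) (ζ := -(uu*ζ))
        (one_add_ne_zero' hwn (mem_ball_iff_normSq.1 (hη ζ hζ)))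
      exact hd.comp ζ ((differentiableAt_id.const_mul uu).neg)
    have hT0 : T 0 = w := by rw [hT]; simp
    have hTr : T ((r:ℝ):ℂ) = z := by
      rw [hT]
      simp only
      have hcr : uu * ((r:ℝ):ℂ) = c := by rw [huu]; field_simp
      rw [hcr]
      have hden2 : (1 : ℂ) + conj' w * (-c) ≠ 0 := by
        have h := one_add_ne_zero' (u := -w) (v := c) (by rwa [Complex.normSq_neg]) hcn
        rw [map_neg, neg_mul, ← sub_eq_add_neg] at h
        rwa [mul_neg, ← sub_eq_add_neg]
      rw [div_eq_iff hden2, hc]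
      have hwden' : (1 : ℂ) - z * conj' w ≠ 0 := by rwa [mul_comm]
      field_simp
      ring
    set F : ℂ → ℂ := fun ζ => f (T ζ) with hF
    have hFdiff : DifferentiableOn ℂ F (Metric.ball 0 1) := fun ζ hζ =>
      ((hf _ (hTball ζ hζ)).comp ζ (hTdiff ζ hζ)).differentiableWithinAt
    have hFRe : ∀ ζ ∈ Metric.ball (0:ℂ) 1, |(F ζ).re| < 1 := fun ζ hζ => hRe _ (hTball ζ hζ)
    have hmain := real_segment_bound hFdiff hFRe (le_of_lt hr0) hrlt
    have hFr : F ((r:ℝ):ℂ) = f z := by rw [hF]; simp only; rw [hTr]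
    have hF0 : F 0 = f w := by rw [hF]; simp only; rw [hT0]
    rw [hFr, hF0] at hmain
    have hrp : pseudoHypDist z w = r := by
      rw [pseudoHypDist, hr, hc, norm_div]
      congr 1
      · rw [norm_sub_rev]
      · rw [← Complex.norm_conj (1 - conj' z * w)]
        congr 1
        rw [map_sub, map_one, map_mul, Complex.conj_conj]
        ring
    rw [hypDist, hrp]
    exact hmain
end
end

section
/- Let k > 0, C₁ > 0 and C₂ be real constants, and let J ⊆ ℝ be an open interval on which sin(C₁·t + C₂) ≠ 0. Then the positive function ω(t) = C₁ / (k·|sin(C₁·t + C₂)|) on J satisfies (ω'(t)² − ω(t)·ω''(t)) / ω(t)⁴ = −k² for all t ∈ J. -/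
open Real

private lemma weight_key (k C₁ C₂ ε : ℝ) (hk : 0 < k) (hC₁ : 0 < C₁)
    (hε : ε = 1 ∨ ε = -1)
    (ω : ℝ → ℝ) (hω : ∀ x, ω x = C₁ / (k * |Real.sin (C₁ * x + C₂)|))
    (t : ℝ) (ht : 0 < ε * Real.sin (C₁ * t + C₂)) :
    (deriv ω t ^ 2 - ω t * deriv (deriv ω) t) / ω t ^ 4 = -k ^ 2 := by
  set U : Set ℝ := {x | 0 < ε * Real.sin (C₁ * x + C₂)} with hUdef
  have hU : IsOpen U := isOpen_lt continuous_const
    (continuous_const.mul (Real.continuous_sin.comp (by continuity)))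
  have htU : t ∈ U := ht
  set g : ℝ → ℝ := fun x => ε * C₁ / k * (Real.sin (C₁ * x + C₂))⁻¹ with hgdef
  set h : ℝ → ℝ := fun x => ε * C₁ / k *
      (-(Real.cos (C₁ * x + C₂) * C₁) / Real.sin (C₁ * x + C₂) ^ 2) with hhdef
  set h2 : ℝ → ℝ := fun x => ε * C₁ / k *
      ((Real.sin (C₁ * x + C₂) * C₁ * C₁ * Real.sin (C₁ * x + C₂) ^ 2 -
        -(Real.cos (C₁ * x + C₂) * C₁) *
          (2 * Real.sin (C₁ * x + C₂) ^ 1 * (Real.cos (C₁ * x + C₂) * C₁))) /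
        (Real.sin (C₁ * x + C₂) ^ 2) ^ 2) with hh2def
  have hsx : ∀ x ∈ U, Real.sin (C₁ * x + C₂) ≠ 0 := by
    intro x hx
    intro h0
    simp only [hUdef, Set.mem_setOf_eq, h0, mul_zero, lt_irrefl] at hx
  have hωg : ∀ x ∈ U, ω x = g x := by
    intro x hx
    have hx' : 0 < ε * Real.sin (C₁ * x + C₂) := hx
    rw [hω, hgdef]
    rcases hε with rfl | rfl
    · rw [one_mul] at hx'
      rw [abs_of_pos hx']
      ring
    · rw [neg_one_mul] at hx'
      have : Real.sin (C₁ * x + C₂) < 0 := by linarith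
      rw [abs_of_neg this]
      have hne : Real.sin (C₁ * x + C₂) ≠ 0 := ne_of_lt this
      field_simp
  have hu : ∀ x : ℝ, HasDerivAt (fun x => C₁ * x + C₂) C₁ x := by
    intro x
    simpa using ((hasDerivAt_id x).const_mul C₁).add_const C₂
  have hsin' : ∀ x : ℝ, HasDerivAt (fun x => Real.sin (C₁ * x + C₂))
      (Real.cos (C₁ * x + C₂) * C₁) x := by
    intro x
    exact (Real.hasDerivAt_sin _).comp x (hu x)
  have hcos' : ∀ x : ℝ, HasDerivAt (fun x => Real.cos (C₁ * x + C₂))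
      (-Real.sin (C₁ * x + C₂) * C₁) x := by
    intro x
    exact (Real.hasDerivAt_cos _).comp x (hu x)
  have hg' : ∀ x ∈ U, HasDerivAt g (h x) x := by
    intro x hx
    have := ((hsin' x).inv (hsx x hx)).const_mul (ε * C₁ / k)
    simp only [hgdef, hhdef]
    exact this
  have hh' : ∀ x ∈ U, HasDerivAt h (h2 x) x := by
    intro x hx
    have hf : HasDerivAt (fun x => -(Real.cos (C₁ * x + C₂) * C₁))
        (Real.sin (C₁ * x + C₂) * C₁ * C₁) x := by
      have := ((hcos' x).mul_const C₁).neg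
      refine this.congr_deriv ?_
      ring
    have hg2 : HasDerivAt (fun x => Real.sin (C₁ * x + C₂) ^ 2)
        (2 * Real.sin (C₁ * x + C₂) ^ 1 * (Real.cos (C₁ * x + C₂) * C₁)) x := by
      simpa using (hsin' x).fun_pow 2
    have hdiv := hf.div hg2 (pow_ne_zero 2 (hsx x hx))
    exact hdiv.const_mul (ε * C₁ / k)
  have hev : ω =ᶠ[nhds t] g := Filter.eventuallyEq_of_mem (hU.mem_nhds htU) hωg
  have hd1 : deriv ω t = h t := by
    rw [hev.deriv_eq]
    exact (hg' t htU).deriv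
  have hev2 : deriv ω =ᶠ[nhds t] h := by
    filter_upwards [hU.mem_nhds htU] with x hx
    have : ω =ᶠ[nhds x] g := Filter.eventuallyEq_of_mem (hU.mem_nhds hx) hωg
    rw [this.deriv_eq]
    exact (hg' x hx).deriv
  have hd2 : deriv (deriv ω) t = h2 t := by
    rw [hev2.deriv_eq]
    exact (hh' t htU).deriv
  rw [hd1, hd2, hωg t htU, hgdef, hhdef, hh2def]
  have hs0 : Real.sin (C₁ * t + C₂) ≠ 0 := hsx t htU
  have hsc : Real.sin (C₁ * t + C₂) ^ 2 + Real.cos (C₁ * t + C₂) ^ 2 = 1 :=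
    Real.sin_sq_add_cos_sq _
  have hε2 : ε ^ 2 = 1 := by rcases hε with rfl | rfl <;> norm_num
  have hk0 : k ≠ 0 := ne_of_gt hk
  have hC0 : C₁ ≠ 0 := ne_of_gt hC₁
  have hε0 : ε ≠ 0 := by rcases hε with rfl | rfl <;> norm_num
  field_simp
  linear_combination (-1) * hsc +
    hε2

/-- For k > 0, C₁ > 0, C₂ and an open interval J on which
sin(C₁t + C₂) ≠ 0, the weight ω(t) = C₁/(k·|sin(C₁t + C₂)|) satisfies
(ω'² − ω·ω'')/ω⁴ = −k² on J. -/
theorem weight_sin_curvature (k C₁ C₂ : ℝ) (hk : 0 < k) (hC₁ : 0 < C₁)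
    (J : Set ℝ) (hJopen : IsOpen J) (hJconn : J.OrdConnected)
    (hsin : ∀ t ∈ J, Real.sin (C₁ * t + C₂) ≠ 0)
    (ω : ℝ → ℝ) (hω : ∀ t, ω t = C₁ / (k * |Real.sin (C₁ * t + C₂)|)) :
    ∀ t ∈ J, (deriv ω t ^ 2 - ω t * deriv (deriv ω) t) / ω t ^ 4 = -k ^ 2 := by
  intro t ht
  rcases lt_or_gt_of_ne (hsin t ht) with hneg | hpos
  · exact weight_key k C₁ C₂ (-1) hk hC₁ (Or.inr rfl) ω hω t (by nlinarith)
  · exact weight_key k C₁ C₂ 1 hk hC₁ (Or.inl rfl) ω hω t (by nlinarith)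
end
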